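/- arXiv:1602.00141 — 3 statements merged into one kernel-verified Lean document; each statement's English description precedes it below -/
import Mathlib

section
/- Let d ≥ 2 be an integer, let α > d be a real number and let C₀ > 0. Then there exists C > 0 with the following property: for every h ∈ (0,1), every sequence (z_n)_{n≥1} of complex numbers of modulus 1 such that for every real L ≥ 1 the set {n : |z_n − 1| ≥ e^{−L/h}} has cardinality at most C₀ (L/h)^{d−1}, and every continuous function f on the unit circle {z ∈ ℂ : |z| = 1} with f(1) = 0 and M := sup_{|z|=1, z≠1} |log|z−1||^α |f(z)| < ∞, the series Σ_{n≥1} |f(z_n)| converges and (2πh)^{d−1} Σ_{n≥1} |f(z_n)| ≤ C (sup_{|z|=1} |f(z)| + M). -/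
open Real Complex

/-- Lemma 6 of the paper: given the eigenvalue counting bound, for every `f` in the
weighted space `C⁰_α(S¹)` (with `α > d`) the weighted sum of `|f(z_n)|` is controlled
by `C (‖f‖_{C⁰} + ‖f‖_α)`, uniformly in `h ∈ (0,1)`. -/
theorem stmt_4 (d : ℕ) (hd : 2 ≤ d) (α : ℝ) (hα : (d : ℝ) < α) (C₀ : ℝ) (hC₀ : 0 < C₀) :
    ∃ C : ℝ, 0 < C ∧
      ∀ h ∈ Set.Ioo (0 : ℝ) 1, ∀ z : ℕ → ℂ,
        (∀ n : ℕ, 1 ≤ n → ‖z n‖ = 1) →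
        (∀ L : ℝ, 1 ≤ L →
          {n : ℕ | 1 ≤ n ∧ Real.exp (-L / h) ≤ ‖z n - 1‖}.Finite ∧
            (({n : ℕ | 1 ≤ n ∧ Real.exp (-L / h) ≤ ‖z n - 1‖}.ncard : ℝ) ≤
              C₀ * (L / h) ^ (d - 1))) →
        ∀ f : ℂ → ℂ, ContinuousOn f (Metric.sphere (0 : ℂ) 1) → f 1 = 0 →
        ∀ M : ℝ,
          (∀ w ∈ Metric.sphere (0 : ℂ) 1, w ≠ 1 →
            |Real.log (‖w - 1‖)| ^ α * ‖f w‖ ≤ M) →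
          Summable (fun n : ℕ => ‖f (z (n + 1))‖) ∧
            (2 * π * h) ^ (d - 1) * ∑' n : ℕ, ‖f (z (n + 1))‖ ≤
              C * (sSup ((fun w => ‖f w‖) '' Metric.sphere (0 : ℂ) 1) + M) := by
  classical
  have hd1 : (1:ℝ) ≤ d := by exact_mod_cast Nat.one_le_iff_ne_zero.mpr (by omega)
  have hα0 : 0 < α := lt_of_le_of_lt (by linarith) hα
  -- the summable comparison series
  set c : ℕ → ℝ := fun k => ((k:ℝ)+2)^(d-1) / ((k:ℝ)+1)^α with hcdef
  have hc0 : ∀ k, 0 ≤ c k := fun k =>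
    div_nonneg (by positivity) (Real.rpow_nonneg (by positivity) α)
  have hcast : ((d-1:ℕ):ℝ) = (d:ℝ) - 1 := by
    have : (1:ℕ) ≤ d := by omega
    push_cast [Nat.cast_sub this]
    ring
  have hc_sum : Summable c := by
    have h1 : Summable (fun k : ℕ => ((k:ℝ)+1) ^ (((d-1:ℕ):ℝ) - α)) := by
      have h2 : Summable (fun k : ℕ => ((k:ℝ)) ^ (((d-1:ℕ):ℝ) - α)) := by
        apply Real.summable_nat_rpow.mpr
        rw [hcast]; linarith
      have h3 := (summable_nat_add_iff (f := fun k : ℕ => ((k:ℝ)) ^ (((d-1:ℕ):ℝ) - α)) 1).mpr h2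
      refine h3.congr fun k => ?_
      push_cast
      ring_nf
    refine Summable.of_nonneg_of_le hc0 (fun k => ?_) (h1.mul_left ((2:ℝ)^(d-1)))
    have hk1 : (0:ℝ) < (k:ℝ)+1 := by positivity
    have hnum : ((k:ℝ)+2)^(d-1) ≤ (2:ℝ)^(d-1) * ((k:ℝ)+1)^(d-1) := by
      rw [← mul_pow]
      apply pow_le_pow_left₀ (by positivity)
      linarith
    have hden : ((k:ℝ)+1)^(d-1) / ((k:ℝ)+1)^α = ((k:ℝ)+1) ^ (((d-1:ℕ):ℝ) - α) := by
      rw [Real.rpow_sub hk1, Real.rpow_natCast]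
    calc c k ≤ ((2:ℝ)^(d-1) * ((k:ℝ)+1)^(d-1)) / ((k:ℝ)+1)^α :=
          div_le_div_of_nonneg_right hnum (Real.rpow_nonneg hk1.le α)
      _ = (2:ℝ)^(d-1) * (((k:ℝ)+1)^(d-1) / ((k:ℝ)+1)^α) := by ring
      _ = (2:ℝ)^(d-1) * ((k:ℝ)+1) ^ (((d-1:ℕ):ℝ) - α) := by rw [hden]
  set K : ℝ := ∑' k, c k with hKdef
  have hK0 : 0 ≤ K := tsum_nonneg hc0
  have hπ : (0:ℝ) < 2*π := by positivity
  refine ⟨(2*π)^(d-1) * C₀ * (1 + K), by positivity, ?_⟩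
  rintro h ⟨hh0, hh1⟩ z hz hcount f hf hf1 M hM
  have hhne : h ≠ 0 := ne_of_gt hh0
  set g : ℕ → ℝ := fun n => ‖f (z (n+1))‖ with hgdef
  have hg0 : ∀ n, 0 ≤ g n := fun n => norm_nonneg _
  have hzs : ∀ n : ℕ, z (n+1) ∈ Metric.sphere (0:ℂ) 1 := by
    intro n
    have := hz (n+1) (by omega)
    simp [Metric.mem_sphere, Complex.dist_eq, this]
  -- the sup norm
  set S : ℝ := sSup ((fun w => ‖f w‖) '' Metric.sphere (0:ℂ) 1) with hSdef
  have hbdd : BddAbove ((fun w => ‖f w‖) '' Metric.sphere (0:ℂ) 1) :=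
    ((isCompact_sphere (0:ℂ) 1).image_of_continuousOn
      (continuous_norm.comp_continuousOn hf)).bddAbove
  have h1s : (1:ℂ) ∈ Metric.sphere (0:ℂ) 1 := by
    simp [Metric.mem_sphere, Complex.dist_eq]
  have hS0 : 0 ≤ S := by
    have := le_csSup hbdd ⟨1, h1s, rfl⟩
    simpa [hf1] using this
  have hgS : ∀ n, g n ≤ S := fun n => le_csSup hbdd ⟨_, hzs n, rfl⟩
  have hM0 : 0 ≤ M := by
    have hm : (-1:ℂ) ∈ Metric.sphere (0:ℂ) 1 := by
      simp [Metric.mem_sphere, Complex.dist_eq]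
    have := hM (-1) hm (by norm_num)
    refine le_trans ?_ this
    positivity
  -- pointwise bound inside a shell
  have hshell : ∀ (k n : ℕ), ‖z (n+1) - 1‖ < Real.exp (-((k:ℝ)+1)/h) →
      0 < ‖z (n+1) - 1‖ → g n ≤ M * (h/((k:ℝ)+1))^α := by
    intro k n hlt hpos
    have hne1 : z (n+1) ≠ 1 := by
      intro he
      rw [he] at hpos
      simp at hpos
    have hMn := hM (z (n+1)) (hzs n) hne1
    set t := ‖z (n+1) - 1‖ with htdef
    have hlog : Real.log t < -((k:ℝ)+1)/h := by
      rw [← Real.log_exp (-((k:ℝ)+1)/h)]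
      exact Real.log_lt_log hpos hlt
    have hq : (0:ℝ) < ((k:ℝ)+1)/h := by positivity
    have hnd : -((k:ℝ)+1)/h = -(((k:ℝ)+1)/h) := neg_div h _
    have hlogq : ((k:ℝ)+1)/h ≤ |Real.log t| := by
      rw [abs_of_neg (by rw [hnd] at hlog; linarith)]
      rw [hnd] at hlog; linarith
    have hr : (((k:ℝ)+1)/h)^α ≤ |Real.log t|^α :=
      Real.rpow_le_rpow (le_of_lt hq) hlogq (le_of_lt hα0)
    have hstep : (((k:ℝ)+1)/h)^α * g n ≤ M := by
      refine le_trans ?_ hMn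
      exact mul_le_mul_of_nonneg_right hr (hg0 n)
    have hqα : (0:ℝ) < (((k:ℝ)+1)/h)^α := Real.rpow_pos_of_pos hq α
    have : g n ≤ M / (((k:ℝ)+1)/h)^α := by
      rw [le_div_iff₀ hqα]
      linarith [hstep, mul_comm ((((k:ℝ)+1)/h)^α) (g n)]
    refine this.trans_eq ?_
    rw [div_eq_mul_inv, ← Real.inv_rpow (le_of_lt hq), inv_div]
  -- the counting finsets
  have hTfin : ∀ J : ℕ,
      {n : ℕ | Real.exp (-((J:ℝ)+1)/h) ≤ ‖z (n+1) - 1‖}.Finite := by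
    intro J
    have h1 := (hcount ((J:ℝ)+1) (by have := (Nat.cast_nonneg J : (0:ℝ) ≤ (J:ℝ)); push_cast; linarith)).1
    refine (h1.image (· - 1)).subset ?_
    intro n hn
    exact ⟨n+1, ⟨by omega, hn⟩, by simp⟩
  set F : ℕ → Finset ℕ := fun J => (hTfin J).toFinset with hFdef
  have hFmem : ∀ J n, n ∈ F J ↔
      Real.exp (-((J:ℝ)+1)/h) ≤ ‖z (n+1) - 1‖ :=
    fun J n => (hTfin J).mem_toFinset
  have hFcard : ∀ J : ℕ, ((F J).card : ℝ) ≤ C₀ * ((((J:ℝ)+1))/h)^(d-1) := by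
    intro J
    obtain ⟨hfin, hcard⟩ := hcount ((J:ℝ)+1) (by have := (Nat.cast_nonneg J : (0:ℝ) ≤ (J:ℝ)); push_cast; linarith)
    set T := {n : ℕ | Real.exp (-((J:ℝ)+1)/h) ≤ ‖z (n+1) - 1‖} with hTdef
    have e1 : (F J).card = T.ncard := (Set.ncard_eq_toFinset_card T (hTfin J)).symm
    have e2 : T.ncard = ((fun n => n+1) '' T).ncard :=
      (Set.ncard_image_of_injective T (add_left_injective 1)).symm
    have e3 : ((fun n => n+1) '' T) ⊆
        {n : ℕ | 1 ≤ n ∧ Real.exp (-((J:ℝ)+1)/h) ≤ ‖z n - 1‖} := by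
      rintro m ⟨n, hn, rfl⟩
      exact ⟨by simp, hn⟩
    have e4 := Set.ncard_le_ncard e3 hfin
    rw [e1, e2]
    exact le_trans (by exact_mod_cast e4) hcard
  -- shell terms
  set t' : ℕ → ℝ := fun k =>
    C₀ * (((k:ℝ)+2)/h)^(d-1) * (M * (h/((k:ℝ)+1))^α) with ht'def
  have ht'0 : ∀ k, 0 ≤ t' k := by
    intro k
    have : (0:ℝ) ≤ M * (h/((k:ℝ)+1))^α :=
      mul_nonneg hM0 (Real.rpow_nonneg (by positivity) α)
    positivity
  have ht'eq : ∀ k, t' k = (C₀ * M * h^α / h^(d-1)) * c k := by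
    intro k
    have hk1 : (0:ℝ) ≤ (k:ℝ)+1 := by positivity
    have hkα : (0:ℝ) < ((k:ℝ)+1)^α := Real.rpow_pos_of_pos (by positivity) α
    simp only [ht'def, hcdef]
    rw [div_pow, Real.div_rpow (le_of_lt hh0) hk1]
    have hhd : (0:ℝ) < h^(d-1) := by positivity
    field_simp
  have ht'sum : Summable t' := by
    refine (Summable.congr ((hc_sum.mul_left (C₀ * M * h^α / h^(d-1)))) fun k => ?_)
    exact (ht'eq k).symm
  set A : ℝ := C₀ * ((1:ℝ)/h)^(d-1) * S with hAdef
  have hF0 : ((F 0).card : ℝ) ≤ C₀ * ((1:ℝ)/h)^(d-1) := by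
    have := hFcard 0
    norm_num at this
    convert this using 3
    norm_num
  -- main induction on shells
  have main : ∀ J : ℕ, ∀ u : Finset ℕ, (∀ n ∈ u, n ∈ F J) →
      ∑ n ∈ u, g n ≤ A + ∑ k ∈ Finset.range J, t' k := by
    intro J
    induction J with
    | zero =>
      intro u hu
      simp only [Finset.range_zero, Finset.sum_empty, add_zero]
      calc ∑ n ∈ u, g n ≤ ∑ n ∈ u, S := Finset.sum_le_sum (fun n _ => hgS n)
        _ = (u.card : ℝ) * S := by rw [Finset.sum_const, nsmul_eq_mul]
        _ ≤ ((F 0).card : ℝ) * S := by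
            have : u ⊆ F 0 := fun n hn => hu n hn
            have hcc : (u.card : ℝ) ≤ ((F 0).card : ℝ) := by
              exact_mod_cast Finset.card_le_card this
            exact mul_le_mul_of_nonneg_right hcc hS0
        _ ≤ A := mul_le_mul_of_nonneg_right hF0 hS0
    | succ J ih =>
      intro u hu
      have hsplit := Finset.sum_filter_add_sum_filter_not u (fun n => n ∈ F J) g
      have h1 : ∑ n ∈ u.filter (fun n => n ∈ F J), g n ≤ A + ∑ k ∈ Finset.range J, t' k :=
        ih _ (fun n hn => (Finset.mem_filter.mp hn).2)
      have h2 : ∑ n ∈ u.filter (fun n => ¬ n ∈ F J), g n ≤ t' J := by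
        have hb : ∀ n ∈ u.filter (fun n => ¬ n ∈ F J), g n ≤ M * (h/((J:ℝ)+1))^α := by
          intro n hn
          obtain ⟨hnu, hnotF⟩ := Finset.mem_filter.mp hn
          have hlt : ‖z (n+1) - 1‖ < Real.exp (-((J:ℝ)+1)/h) := by
            by_contra hge
            exact hnotF ((hFmem J n).mpr (le_of_not_gt hge))
          have hmem := (hFmem (J+1) n).mp (hu n hnu)
          have hpos : 0 < ‖z (n+1) - 1‖ :=
            lt_of_lt_of_le (Real.exp_pos _) hmem
          exact hshell J n hlt hpos
        have hb2 : (0:ℝ) ≤ M * (h/((J:ℝ)+1))^α :=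
          mul_nonneg hM0 (Real.rpow_nonneg (by positivity) α)
        calc ∑ n ∈ u.filter (fun n => ¬ n ∈ F J), g n
            ≤ ((u.filter (fun n => ¬ n ∈ F J)).card : ℝ) * (M * (h/((J:ℝ)+1))^α) := by
              have := Finset.sum_le_card_nsmul _ _ _ hb
              simpa [nsmul_eq_mul] using this
          _ ≤ ((F (J+1)).card : ℝ) * (M * (h/((J:ℝ)+1))^α) := by
              refine mul_le_mul_of_nonneg_right ?_ hb2
              have hsub : u.filter (fun n => ¬ n ∈ F J) ⊆ F (J+1) :=
                fun n hn => hu n (Finset.mem_filter.mp hn).1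
              exact_mod_cast Finset.card_le_card hsub
          _ ≤ C₀ * (((J:ℝ)+2)/h)^(d-1) * (M * (h/((J:ℝ)+1))^α) := by
              refine mul_le_mul_of_nonneg_right ?_ hb2
              have := hFcard (J+1)
              push_cast at this
              convert this using 4
              · rfl
              · ring
          _ = t' J := rfl
      rw [Finset.sum_range_succ]
      linarith [hsplit, h1, h2]
  -- uniform bound over all finsets
  set B : ℝ := A + ∑' k, t' k with hBdef
  have ht'sumle : ∀ J : ℕ, ∑ k ∈ Finset.range J, t' k ≤ ∑' k, t' k :=
    fun J => Summable.sum_le_tsum _ (fun k _ => ht'0 k) ht'sum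
  have hfinsum : ∀ u : Finset ℕ, ∑ n ∈ u, g n ≤ B := by
    intro u
    set u' := u.filter (fun n => z (n+1) ≠ 1) with hu'def
    have hequ : ∑ n ∈ u, g n = ∑ n ∈ u', g n := by
      rw [← Finset.sum_filter_add_sum_filter_not u (fun n => z (n+1) ≠ 1) g]
      have hz0 : ∑ n ∈ u.filter (fun n => ¬ z (n+1) ≠ 1), g n = 0 := by
        refine Finset.sum_eq_zero fun n hn => ?_
        have h2 := (Finset.mem_filter.mp hn).2
        simp only [not_not] at h2
        simp [hgdef, h2, hf1]
      rw [hz0, add_zero]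
    set J : ℕ := u'.sup (fun n => ⌈-h * Real.log (‖z (n+1) - 1‖)⌉₊) with hJdef
    have hsub : ∀ n ∈ u', n ∈ F J := by
      intro n hn
      have hne1 : z (n+1) ≠ 1 := (Finset.mem_filter.mp hn).2
      have hpos : 0 < ‖z (n+1) - 1‖ := by
        rw [norm_pos_iff]
        exact sub_ne_zero.mpr hne1
      rw [hFmem]
      rw [← Real.le_log_iff_exp_le hpos]
      have hle : (⌈-h * Real.log (‖z (n+1) - 1‖)⌉₊ : ℕ) ≤ J :=
        Finset.le_sup (f := fun m => ⌈-h * Real.log (‖z (m+1) - 1‖)⌉₊) hn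
      have hle2 : -h * Real.log (‖z (n+1) - 1‖) ≤ (J:ℝ) :=
        le_trans (Nat.le_ceil _) (by exact_mod_cast hle)
      rw [div_le_iff₀ hh0]
      nlinarith [hle2]
    have := main J u' hsub
    rw [hequ]
    exact le_trans this (by
      have := ht'sumle J
      simp only [hBdef]
      linarith)
  have hsummable : Summable g := summable_of_sum_le hg0 hfinsum
  have htsum : ∑' n, g n ≤ B :=
    Real.tsum_le_of_sum_range_le hg0 (fun n => hfinsum (Finset.range n))
  refine ⟨hsummable, ?_⟩
  -- final arithmetic
  have hTT : ∑' k, t' k = (C₀ * M * h^α / h^(d-1)) * K := by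
    rw [hKdef, ← tsum_mul_left]
    exact tsum_congr ht'eq
  have hpow : (0:ℝ) ≤ (2*π*h)^(d-1) := by positivity
  have step1 : (2*π*h)^(d-1) * ∑' n, g n ≤ (2*π*h)^(d-1) * B :=
    mul_le_mul_of_nonneg_left htsum hpow
  refine le_trans step1 ?_
  have hhd : (0:ℝ) < h^(d-1) := by positivity
  have E1 : (2*π*h)^(d-1) * A = (2*π)^(d-1) * C₀ * S := by
    simp only [hAdef, mul_pow, div_pow, one_pow]
    field_simp
  have E2 : (2*π*h)^(d-1) * ((C₀ * M * h^α / h^(d-1)) * K)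
      = (2*π)^(d-1) * C₀ * M * h^α * K := by
    simp only [mul_pow]
    field_simp
  have hhα1 : h^α ≤ 1 := Real.rpow_le_one (le_of_lt hh0) (le_of_lt hh1) (le_of_lt hα0)
  have hhα0 : (0:ℝ) ≤ h^α := Real.rpow_nonneg (le_of_lt hh0) α
  have hP : (0:ℝ) < (2*π)^(d-1) * C₀ := by positivity
  calc (2*π*h)^(d-1) * B = (2*π)^(d-1) * C₀ * S + (2*π)^(d-1) * C₀ * M * h^α * K := by
        rw [hBdef, mul_add, E1, hTT, E2]
    _ ≤ (2*π)^(d-1) * C₀ * (1 + K) * (S + M) := by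
        nlinarith [mul_nonneg (mul_nonneg hP.le hM0) hK0,
          mul_nonneg (mul_nonneg hP.le hK0) hS0,
          mul_nonneg hP.le hM0,
          mul_nonneg (mul_nonneg (mul_nonneg hP.le hM0) hK0) hhα0]
end

section
/- Let α > α' > 0 be real numbers and let f be a continuous function on the unit circle {z ∈ ℂ : |z| = 1} such that the function equal to f(z)|log|z−1||^α for z ≠ 1 and to 0 at z = 1 is continuous on the circle. Then for every ε > 0 there exists a trigonometric polynomial q (a finite sum q(z) = Σ_{k} c_k z^k over integers k ∈ ℤ, c_k ∈ ℂ) with q(1) = 0, such that sup_{|z|=1} |f(z) − q(z)| ≤ ε and sup_{|z|=1, z≠1} |log|z−1||^{α'} |f(z) − q(z)| ≤ ε. -/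
open Real Complex Submodule Set

lemma approx_sphere (h : ℂ → ℂ) (hh : ContinuousOn h (Metric.sphere (0 : ℂ) 1))
    {η : ℝ} (hη : 0 < η) :
    ∃ (s : Finset ℤ) (b : ℤ → ℂ), ∀ w ∈ Metric.sphere (0 : ℂ) 1,
      ‖h w - ∑ k ∈ s, b k * w ^ k‖ ≤ η := by
  haveI : Fact (0 < 2 * π) := ⟨by positivity⟩
  set T : ℝ := 2 * π with hT
  have hcont : Continuous fun x : AddCircle T => h ((AddCircle.toCircle x : ℂ)) := by
    apply hh.comp_continuous
    · exact continuous_subtype_val.comp AddCircle.continuous_toCircle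
    · intro x
      simp [Metric.mem_sphere, Complex.dist_eq, Circle.norm_coe]
  set H : C(AddCircle T, ℂ) := ⟨_, hcont⟩
  have hHmem : H ∈ closure ((span ℂ (range <| @fourier T) : Submodule ℂ C(AddCircle T, ℂ)) :
      Set C(AddCircle T, ℂ)) := by
    rw [← Submodule.topologicalClosure_coe, span_fourier_closure_eq_top (T := T)]
    trivial
  obtain ⟨P, hPmem, hPd⟩ := Metric.mem_closure_iff.mp hHmem η hη
  obtain ⟨cc, hcc⟩ := Finsupp.mem_span_range_iff_exists_finsupp.mp hPmem
  refine ⟨cc.support, cc, fun w hw => ?_⟩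
  have habs : ‖w‖ = 1 := by simpa [Complex.dist_eq] using hw
  have hwe : Complex.exp (w.arg * Complex.I) = w := by
    have := Complex.norm_mul_exp_arg_mul_I w
    rwa [habs, Complex.ofReal_one, one_mul] at this
  have hπ : (π : ℂ) ≠ 0 := Complex.ofReal_ne_zero.mpr Real.pi_ne_zero
  have hfour : ∀ k : ℤ, fourier k ((w.arg : ℝ) : AddCircle T) = w ^ k := by
    intro k
    rw [fourier_coe_apply]
    have harg : 2 * ↑π * Complex.I * ↑k * ↑w.arg / ↑T = ↑k * (↑w.arg * Complex.I) := by
      push_cast [hT]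
      field_simp
    rw [harg, Complex.exp_int_mul, hwe]
  have hPval : P ((w.arg : ℝ) : AddCircle T) = ∑ k ∈ cc.support, cc k * w ^ k := by
    rw [← hcc, Finsupp.sum]
    rw [ContinuousMap.coe_sum, Finset.sum_apply]
    exact Finset.sum_congr rfl fun k _ => by
      rw [ContinuousMap.coe_smul, Pi.smul_apply, hfour k, smul_eq_mul]
  have hHval : H ((w.arg : ℝ) : AddCircle T) = h w := by
    show h _ = h w
    congr 1
    have : (AddCircle.toCircle ((w.arg : ℝ) : AddCircle T) : ℂ)
        = Complex.exp (w.arg * Complex.I) := by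
      rw [AddCircle.toCircle_apply_mk, Circle.coe_exp]
      congr 1
      push_cast [hT]
      field_simp
    rw [this, hwe]
  calc ‖h w - ∑ k ∈ cc.support, cc k * w ^ k‖
      = dist (H ((w.arg : ℝ) : AddCircle T)) (P ((w.arg : ℝ) : AddCircle T)) := by
        rw [hPval, hHval, Complex.dist_eq]
    _ ≤ dist H P := ContinuousMap.dist_apply_le_dist _
    _ ≤ η := hPd.le

lemma trig_shift (s : Finset ℤ) (b : ℤ → ℂ) :
    ∃ (s' : Finset ℤ) (c : ℤ → ℂ), ∀ w : ℂ, w ≠ 0 →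
      ∑ k ∈ s', c k * w ^ k = (w - 1) * ∑ k ∈ s, b k * w ^ k := by
  classical
  set e : ℤ ↪ ℤ := ⟨fun k => k + 1, add_left_injective 1⟩ with he
  refine ⟨s ∪ s.map e, fun k => (if k - 1 ∈ s then b (k - 1) else 0) - (if k ∈ s then b k else 0),
    fun w hw => ?_⟩
  have hsub1 : s ⊆ s ∪ s.map e := Finset.subset_union_left
  have hsub2 : s.map e ⊆ s ∪ s.map e := Finset.subset_union_right
  have key : ∀ k : ℤ, (k - 1 ∈ s) ↔ k ∈ s.map e := by
    intro k
    simp only [Finset.mem_map, he, Function.Embedding.coeFn_mk]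
    constructor
    · intro hk; exact ⟨k - 1, hk, by omega⟩
    · rintro ⟨a, ha, rfl⟩; simpa using ha
  have h1 : ∑ k ∈ s ∪ s.map e, (if k - 1 ∈ s then b (k - 1) else 0) * w ^ k
      = w * ∑ k ∈ s, b k * w ^ k := by
    calc ∑ k ∈ s ∪ s.map e, (if k - 1 ∈ s then b (k - 1) else 0) * w ^ k
        = ∑ k ∈ s ∪ s.map e, (if k ∈ s.map e then b (k - 1) * w ^ k else 0) := by
          refine Finset.sum_congr rfl fun k _ => ?_
          rw [if_congr (key k) rfl rfl]
          split_ifs <;> simp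
      _ = ∑ k ∈ (s ∪ s.map e) ∩ s.map e, b (k - 1) * w ^ k := by rw [Finset.sum_ite_mem]
      _ = ∑ k ∈ s.map e, b (k - 1) * w ^ k := by rw [Finset.inter_eq_right.mpr hsub2]
      _ = ∑ j ∈ s, b (j + 1 - 1) * w ^ (j + 1) := by rw [Finset.sum_map]; rfl
      _ = w * ∑ k ∈ s, b k * w ^ k := by
          rw [Finset.mul_sum]
          refine Finset.sum_congr rfl fun j _ => ?_
          rw [zpow_add_one₀ hw]
          simp only [add_sub_cancel_right]
          ring
  have h2 : ∑ k ∈ s ∪ s.map e, (if k ∈ s then b k else 0) * w ^ k = ∑ k ∈ s, b k * w ^ k := by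
    calc ∑ k ∈ s ∪ s.map e, (if k ∈ s then b k else 0) * w ^ k
        = ∑ k ∈ s ∪ s.map e, (if k ∈ s then b k * w ^ k else 0) := by
          refine Finset.sum_congr rfl fun k _ => ?_
          split_ifs <;> simp
      _ = ∑ k ∈ (s ∪ s.map e) ∩ s, b k * w ^ k := by rw [Finset.sum_ite_mem]
      _ = ∑ k ∈ s, b k * w ^ k := by rw [Finset.inter_eq_right.mpr hsub1]
  calc ∑ k ∈ s ∪ s.map e, ((if k - 1 ∈ s then b (k - 1) else 0) - (if k ∈ s then b k else 0)) * w ^ k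
      = ∑ k ∈ s ∪ s.map e, ((if k - 1 ∈ s then b (k - 1) else 0) * w ^ k
          - (if k ∈ s then b k else 0) * w ^ k) := by
        refine Finset.sum_congr rfl fun k _ => by ring
    _ = w * ∑ k ∈ s, b k * w ^ k - ∑ k ∈ s, b k * w ^ k := by
        rw [Finset.sum_sub_distrib, h1, h2]
    _ = (w - 1) * ∑ k ∈ s, b k * w ^ k := by ring

lemma weight_bound {α' : ℝ} (hα' : 0 < α') :
    ∃ C : ℝ, 0 < C ∧ ∀ t : ℝ, 0 < t → t ≤ 2 → |Real.log t| ^ α' * t ≤ C := by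
  set β : ℝ := 1 / (2 * α') with hβ
  have hβpos : 0 < β := by positivity
  refine ⟨max 2 (1 / β ^ α'), lt_max_of_lt_left two_pos, fun t ht ht2 => ?_⟩
  rcases le_or_gt 1 t with h1 | h1
  · have hlog : |Real.log t| ≤ 1 := by
      rw [_root_.abs_of_nonneg (Real.log_nonneg h1)]
      calc Real.log t ≤ Real.log 2 := Real.log_le_log ht ht2
        _ ≤ 1 := by have := Real.log_two_lt_d9; linarith
    have h2 : |Real.log t| ^ α' ≤ 1 := Real.rpow_le_one (abs_nonneg _) hlog hα'.le
    calc |Real.log t| ^ α' * t ≤ 1 * 2 := mul_le_mul h2 ht2 ht.le one_pos.le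
      _ ≤ max 2 (1 / β ^ α') := by simp
  · have hlogt : |Real.log t| = Real.log (1 / t) := by
      rw [_root_.abs_of_nonpos (Real.log_nonpos ht.le h1.le), one_div, Real.log_inv]
    have hlog_le : Real.log (1 / t) ≤ (1 / t) ^ β / β := by
      have h1' : Real.log ((1 / t) ^ β) = β * Real.log (1 / t) := Real.log_rpow (by positivity) β
      have h2' : Real.log ((1 / t) ^ β) ≤ (1 / t) ^ β - 1 :=
        Real.log_le_sub_one_of_pos (by positivity)
      rw [le_div_iff₀ hβpos, mul_comm, ← h1']
      have h3' : (0:ℝ) < (1 / t) ^ β := by positivity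
      linarith
    have habs_le : |Real.log t| ≤ (1 / t) ^ β / β := hlogt ▸ hlog_le
    have step1 : |Real.log t| ^ α' ≤ ((1 / t) ^ β) ^ α' / β ^ α' := by
      rw [← Real.div_rpow (by positivity) hβpos.le]
      exact Real.rpow_le_rpow (abs_nonneg _) habs_le hα'.le
    have hβα' : β * α' = 1 / 2 := by rw [hβ]; field_simp
    have step2 : ((1 / t) ^ β) ^ α' = (1 / t) ^ (1/2 : ℝ) := by
      rw [← Real.rpow_mul (by positivity), hβα']
    set X : ℝ := t ^ (1/2 : ℝ) with hX
    have hXpos : 0 < X := Real.rpow_pos_of_pos ht _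
    have hXX : X * X = t := by
      rw [hX, ← Real.rpow_add ht]; norm_num
    have hinv : (1 / t) ^ (1/2 : ℝ) = X⁻¹ := by
      rw [one_div, Real.inv_rpow ht.le]
    have hX1 : X ≤ 1 := Real.rpow_le_one ht.le h1.le (by norm_num)
    calc |Real.log t| ^ α' * t ≤ ((1 / t) ^ β) ^ α' / β ^ α' * t :=
          mul_le_mul_of_nonneg_right step1 ht.le
      _ = X⁻¹ * (X * X) / β ^ α' := by rw [step2, hinv, hXX]; ring
      _ = X / β ^ α' := by rw [← mul_assoc, inv_mul_cancel₀ hXpos.ne', one_mul]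
      _ ≤ 1 / β ^ α' := by
          apply div_le_div_of_nonneg_right hX1 (by positivity) |>.trans_eq rfl
      _ ≤ max 2 (1 / β ^ α') := le_max_right _ _

/-- Density argument in the proof of Theorem 3 of the paper: any `f ∈ C⁰_α(S¹)` can be
approximated, both uniformly and in the weighted norm `‖·‖_{α'}` (for `α > α' > 0`),
by trigonometric polynomials vanishing at `1`. -/
theorem stmt_5 (α α' : ℝ) (hα' : 0 < α') (hαα' : α' < α)
    (f : ℂ → ℂ) (hf : ContinuousOn f (Metric.sphere (0 : ℂ) 1))
    (hext : ContinuousOn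
      (fun w : ℂ => if w = 1 then (0 : ℂ)
        else f w * Complex.ofReal (|Real.log (‖w - 1‖)| ^ α))
      (Metric.sphere (0 : ℂ) 1)) :
    ∀ ε : ℝ, 0 < ε →
      ∃ (s : Finset ℤ) (c : ℤ → ℂ),
        (∑ k ∈ s, c k * (1 : ℂ) ^ k = 0) ∧
        (∀ w ∈ Metric.sphere (0 : ℂ) 1,
          ‖f w - ∑ k ∈ s, c k * w ^ k‖ ≤ ε) ∧
        (∀ w ∈ Metric.sphere (0 : ℂ) 1, w ≠ 1 →
          |Real.log (‖w - 1‖)| ^ α' *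
            ‖f w - ∑ k ∈ s, c k * w ^ k‖ ≤ ε) := by
  intro ε hε
  classical
  have h1S : (1:ℂ) ∈ Metric.sphere (0:ℂ) 1 := by simp
  have hα : 0 < α := hα'.trans hαα'
  have habs_mem : ∀ w ∈ Metric.sphere (0:ℂ) 1, ‖w‖ = 1 := by
    intro w hw; simpa [Complex.dist_eq] using hw
  -- key smallness of f near 1
  have hsmall : ∀ ε' : ℝ, 0 < ε' → ∃ δ₁ : ℝ, 0 < δ₁ ∧ δ₁ ≤ Real.exp (-1) ∧
      ∀ w ∈ Metric.sphere (0:ℂ) 1, w ≠ 1 → ‖w - 1‖ < δ₁ →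
        ‖f w‖ ≤ ε' ∧
        |Real.log (‖w - 1‖)| ^ α' * ‖f w‖ ≤ ε' := by
    intro ε' hε'
    have hcw := hext 1 h1S
    rw [Metric.continuousWithinAt_iff] at hcw
    obtain ⟨δ₀, hδ₀, hkey⟩ := hcw ε' hε'
    refine ⟨min δ₀ (Real.exp (-1)), lt_min hδ₀ (Real.exp_pos _), min_le_right _ _, ?_⟩
    intro w hwS hw1 hwd
    have ht0 : 0 < ‖w - 1‖ := norm_pos_iff.mpr (sub_ne_zero.mpr hw1)
    have hte : ‖w - 1‖ ≤ Real.exp (-1) :=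
      le_of_lt (lt_of_lt_of_le hwd (min_le_right _ _))
    have hlt : Real.log (‖w - 1‖) ≤ -1 := by
      have := Real.log_le_log ht0 hte
      rwa [Real.log_exp] at this
    have hL1 : 1 ≤ |Real.log (‖w - 1‖)| := by
      rw [_root_.abs_of_nonpos (by linarith)]; linarith
    have hFd := hkey hwS (by
      rw [Complex.dist_eq]; exact lt_of_lt_of_le hwd (min_le_left _ _))
    rw [if_neg hw1, if_pos rfl, Complex.dist_eq, sub_zero, norm_mul, Complex.norm_real, Real.norm_eq_abs,
      _root_.abs_of_nonneg (Real.rpow_nonneg (abs_nonneg _) _)] at hFd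
    have hLα : 1 ≤ |Real.log (‖w - 1‖)| ^ α := Real.one_le_rpow hL1 hα.le
    constructor
    · calc ‖f w‖
          ≤ ‖f w‖ * |Real.log (‖w - 1‖)| ^ α :=
            le_mul_of_one_le_right (norm_nonneg _) hLα
        _ ≤ ε' := hFd.le
    · have hmono : |Real.log (‖w - 1‖)| ^ α'
          ≤ |Real.log (‖w - 1‖)| ^ α :=
        Real.rpow_le_rpow_of_exponent_le hL1 hαα'.le
      calc |Real.log (‖w - 1‖)| ^ α' * ‖f w‖
          ≤ |Real.log (‖w - 1‖)| ^ α * ‖f w‖ :=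
            mul_le_mul_of_nonneg_right hmono (norm_nonneg _)
        _ ≤ ε' := by rw [mul_comm]; exact hFd.le
  -- f 1 = 0
  have hf1 : f 1 = 0 := by
    have key : ∀ ε' : ℝ, 0 < ε' → ‖f 1‖ ≤ ε' := by
      intro ε' hε'
      obtain ⟨δ₁, hδ₁, _, hδsmall⟩ := hsmall (ε'/2) (by linarith)
      have hcw := hf 1 h1S
      rw [Metric.continuousWithinAt_iff] at hcw
      obtain ⟨δ₂, hδ₂, hkey⟩ := hcw (ε'/2) (half_pos hε')
      set x : ℝ := min (min δ₁ δ₂ / 4) 1 with hx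
      have hmin : 0 < min δ₁ δ₂ := lt_min hδ₁ hδ₂
      have hx0 : 0 < x := lt_min (by positivity) one_pos
      have hx1 : x ≤ 1 := min_le_right _ _
      set w : ℂ := Complex.exp (x * Complex.I) with hwdef
      have hwS : w ∈ Metric.sphere (0:ℂ) 1 := by
        rw [Metric.mem_sphere, Complex.dist_eq, sub_zero, hwdef,
          Complex.norm_exp_ofReal_mul_I]
      have hwd : ‖w - 1‖ ≤ 2 * x := by
        have h := Complex.norm_exp_sub_one_le (x := x * Complex.I)
          (by rw [norm_mul, Complex.norm_I, mul_one, Complex.norm_real, Real.norm_eq_abs];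
              rwa [_root_.abs_of_pos hx0])
        rwa [norm_mul, Complex.norm_I, mul_one, Complex.norm_real, Real.norm_eq_abs, _root_.abs_of_pos hx0] at h
      have hw1 : w ≠ 1 := by
        intro hcontra
        obtain ⟨n, hn⟩ := Complex.exp_eq_one_iff.mp hcontra
        have h2 : (x:ℂ) * Complex.I = ((n:ℂ) * (2*π)) * Complex.I := by rw [hn]; ring
        have h3 : (x:ℂ) = (n:ℂ) * (2*π) := mul_right_cancel₀ Complex.I_ne_zero h2
        have h4 : x = (n:ℝ) * (2*π) := by exact_mod_cast h3
        have hπ3 : (3:ℝ) < π := Real.pi_gt_three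
        rcases le_or_gt (n:ℝ) 0 with hn0 | hn0
        · nlinarith
        · have : (1:ℝ) ≤ (n:ℝ) := by exact_mod_cast hn0
          nlinarith
      have hxlt : 2 * x < min δ₁ δ₂ := by
        have h5 : x ≤ min δ₁ δ₂ / 4 := min_le_left _ _
        linarith
      have h2 := hδsmall w hwS hw1
        (lt_of_le_of_lt hwd (lt_of_lt_of_le hxlt (min_le_left _ _)))
      have h3 := hkey hwS (by
        rw [Complex.dist_eq]
        exact lt_of_le_of_lt hwd (lt_of_lt_of_le hxlt (min_le_right _ _)))
      rw [Complex.dist_eq] at h3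
      calc ‖f 1‖ = ‖(f 1 - f w) + f w‖ := by rw [sub_add_cancel]
        _ ≤ ‖f 1 - f w‖ + ‖f w‖ := norm_add_le _ _
        _ ≤ ε'/2 + ε'/2 := add_le_add
            (by rw [← norm_neg, neg_sub]; exact h3.le) h2.1
        _ = ε' := by ring
    by_contra hne
    have h0 : 0 < ‖f 1‖ := norm_pos_iff.mpr hne
    have := key (‖f 1‖ / 2) (by linarith)
    linarith
  -- the constant C
  obtain ⟨C, hC0, hC⟩ := weight_bound hα'
  -- δ₁ for ε/2
  obtain ⟨δ₁, hδ₁, hδ₁e, hδkey⟩ := hsmall (ε/2) (half_pos hε)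
  -- the cutoff function
  set χ : ℝ → ℝ := fun t => max 0 (min 1 (2*t/δ₁ - 1)) with hχdef
  have hχ0 : ∀ t : ℝ, t ≤ δ₁/2 → χ t = 0 := by
    intro t htle
    have h2 : 2*t/δ₁ - 1 ≤ 0 := by
      rw [sub_nonpos, div_le_one hδ₁]; linarith
    simp only [hχdef]
    rw [max_eq_left (le_trans (min_le_right _ _) h2)]
  have hχ1 : ∀ t : ℝ, δ₁ ≤ t → χ t = 1 := by
    intro t htge
    have h2 : (1:ℝ) ≤ 2*t/δ₁ - 1 := by
      rw [le_sub_iff_add_le, le_div_iff₀ hδ₁]; linarith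
    simp only [hχdef]
    rw [min_eq_left h2, max_eq_right zero_le_one]
  have hχmem : ∀ t : ℝ, 0 ≤ χ t ∧ χ t ≤ 1 :=
    fun t => ⟨le_max_left _ _, max_le zero_le_one (min_le_left _ _)⟩
  have hχcont : Continuous χ := by
    apply continuous_const.max
    apply continuous_const.min
    exact ((continuous_const.mul continuous_id).div_const δ₁).sub continuous_const
  -- ψ
  set ψ : ℂ → ℂ := fun w => ((χ (‖w-1‖) : ℝ) : ℂ) * (w-1)⁻¹ with hψdef
  have hψ1 : ψ 1 = 0 := by
    simp only [hψdef, sub_self, norm_zero]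
    rw [hχ0 0 (by linarith)]
    simp
  have hψcont : Continuous ψ := by
    rw [continuous_iff_continuousAt]
    intro z
    by_cases hz : z = 1
    · subst hz
      have hev : ψ =ᶠ[nhds (1:ℂ)] fun _ => 0 := by
        apply Filter.eventuallyEq_of_mem (Metric.ball_mem_nhds (1:ℂ) (by linarith : (0:ℝ) < δ₁/2))
        intro y hy
        have hy' : ‖y - 1‖ ≤ δ₁/2 := by
          rw [Metric.mem_ball, Complex.dist_eq] at hy; exact hy.le
        simp only [hψdef]
        rw [hχ0 _ hy']
        simp
      have : ContinuousAt (fun _ : ℂ => (0:ℂ)) 1 := continuousAt_const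
      exact this.congr hev.symm
    · have hz' : z - 1 ≠ 0 := sub_ne_zero.mpr hz
      apply ContinuousAt.mul
      · exact (Complex.continuous_ofReal.comp
          (hχcont.comp ((continuous_norm.comp (continuous_id.sub continuous_const))))).continuousAt
      · exact ((continuous_id.sub continuous_const).continuousAt).inv₀ hz'
  have hψeq : ∀ w : ℂ, (w - 1) * ψ w = ((χ (‖w-1‖) : ℝ) : ℂ) := by
    intro w
    by_cases hw : w = 1
    · subst hw
      rw [hψ1, sub_self, zero_mul, norm_zero, hχ0 0 (by linarith)]
      simp
    · have hw' : w - 1 ≠ 0 := sub_ne_zero.mpr hw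
      simp only [hψdef]
      rw [← mul_assoc, mul_comm (w-1), mul_assoc, mul_inv_cancel₀ hw', mul_one]
  have hkeyid : ∀ w : ℂ, (w - 1) * (f w * ψ w)
      = f w * ((χ (‖w-1‖) : ℝ) : ℂ) := by
    intro w
    calc (w - 1) * (f w * ψ w) = f w * ((w - 1) * ψ w) := by ring
      _ = f w * ((χ (‖w-1‖) : ℝ) : ℂ) := by rw [hψeq]
  -- approximation of h = f * ψ
  have hhcont : ContinuousOn (fun w => f w * ψ w) (Metric.sphere (0:ℂ) 1) :=
    hf.mul hψcont.continuousOn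
  have hmax1 : (1:ℝ) ≤ max C 1 := le_max_right _ _
  have hmaxC : C ≤ max C 1 := le_max_left _ _
  set η : ℝ := ε / (4 * max C 1) with hηdef
  have hηpos : 0 < η := by
    apply div_pos hε; nlinarith
  have hηε : η * (4 * max C 1) = ε := div_mul_cancel₀ _ (by nlinarith)
  obtain ⟨s, b, happ⟩ := approx_sphere _ hhcont hηpos
  obtain ⟨s', c, hq⟩ := trig_shift s b
  -- decomposition
  have hdecomp : ∀ w : ℂ, w ≠ 0 → f w - ∑ k ∈ s', c k * w ^ k
      = (f w - f w * ((χ (‖w-1‖) : ℝ) : ℂ))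
        + (w - 1) * (f w * ψ w - ∑ k ∈ s, b k * w ^ k) := by
    intro w hw0
    rw [hq w hw0, mul_sub, hkeyid w]
    ring
  -- estimates on f - f·χ
  have hfg : ∀ w ∈ Metric.sphere (0:ℂ) 1,
      ‖f w - f w * ((χ (‖w-1‖) : ℝ) : ℂ)‖ ≤ ε/2 ∧
      (w ≠ 1 → |Real.log (‖w-1‖)| ^ α' *
        ‖f w - f w * ((χ (‖w-1‖) : ℝ) : ℂ)‖ ≤ ε/2) := by
    intro w hw
    by_cases hw1 : w = 1
    · subst hw1
      constructor
      · rw [hf1]; simp; linarith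
      · intro h; exact absurd rfl h
    rcases le_or_gt δ₁ (‖w - 1‖) with hge | hlt
    · have : f w - f w * ((χ (‖w-1‖) : ℝ) : ℂ) = 0 := by
        rw [hχ1 _ hge]; simp
      rw [this, norm_zero]
      constructor
      · linarith
      · intro _; rw [mul_zero]; linarith
    · obtain ⟨hu, hwt⟩ := hδkey w hw hw1 hlt
      have hfactor : ‖f w - f w * ((χ (‖w-1‖) : ℝ) : ℂ)‖
          ≤ ‖f w‖ := by
        have : f w - f w * ((χ (‖w-1‖) : ℝ) : ℂ)
            = f w * ((((1:ℝ) - χ (‖w-1‖)) : ℝ) : ℂ) := by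
          push_cast; ring
        rw [this, norm_mul, Complex.norm_real, Real.norm_eq_abs]
        have hb := hχmem (‖w-1‖)
        have : |1 - χ (‖w-1‖)| ≤ 1 := by
          rw [abs_le]; constructor <;> linarith [hb.1, hb.2]
        calc ‖f w‖ * |1 - χ (‖w-1‖)|
            ≤ ‖f w‖ * 1 := mul_le_mul_of_nonneg_left this (norm_nonneg _)
          _ = ‖f w‖ := mul_one _
      constructor
      · exact hfactor.trans hu
      · intro _
        have hwnn : 0 ≤ |Real.log (‖w-1‖)| ^ α' :=
          Real.rpow_nonneg (abs_nonneg _) _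
        calc |Real.log (‖w-1‖)| ^ α' *
              ‖f w - f w * ((χ (‖w-1‖) : ℝ) : ℂ)‖
            ≤ |Real.log (‖w-1‖)| ^ α' * ‖f w‖ :=
              mul_le_mul_of_nonneg_left hfactor hwnn
          _ ≤ ε/2 := hwt
  refine ⟨s', c, ?_, ?_, ?_⟩
  · rw [hq 1 one_ne_zero]; ring
  · -- uniform estimate
    intro w hw
    have habsw : ‖w‖ = 1 := habs_mem w hw
    have hw0 : w ≠ 0 := by
      intro h; rw [h] at habsw; simp at habsw
    have ht2 : ‖w - 1‖ ≤ 2 := by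
      calc ‖w - 1‖ ≤ ‖w‖ + ‖(1:ℂ)‖ := by
            simpa using norm_sub_le w 1
        _ = 2 := by rw [habsw, norm_one]; norm_num
    have h2η : 2 * η ≤ ε / 2 := by nlinarith [hηpos.le]
    calc ‖f w - ∑ k ∈ s', c k * w ^ k‖
        = ‖(f w - f w * ((χ (‖w-1‖) : ℝ) : ℂ))
            + (w - 1) * (f w * ψ w - ∑ k ∈ s, b k * w ^ k)‖ := by rw [hdecomp w hw0]
      _ ≤ ‖f w - f w * ((χ (‖w-1‖) : ℝ) : ℂ)‖
            + ‖w - 1‖ * ‖f w * ψ w - ∑ k ∈ s, b k * w ^ k‖ := by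
          rw [← norm_mul]; exact norm_add_le _ _
      _ ≤ ε/2 + 2 * η := add_le_add (hfg w hw).1
          (mul_le_mul ht2 (happ w hw) (norm_nonneg _) (by norm_num))
      _ ≤ ε/2 + ε/2 := by linarith
      _ = ε := by ring
  · -- weighted estimate
    intro w hw hw1
    have habsw : ‖w‖ = 1 := habs_mem w hw
    have hw0 : w ≠ 0 := by
      intro h; rw [h] at habsw; simp at habsw
    have ht0 : 0 < ‖w - 1‖ := norm_pos_iff.mpr (sub_ne_zero.mpr hw1)
    have ht2 : ‖w - 1‖ ≤ 2 := by
      calc ‖w - 1‖ ≤ ‖w‖ + ‖(1:ℂ)‖ := by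
            simpa using norm_sub_le w 1
        _ = 2 := by rw [habsw, norm_one]; norm_num
    have hwnn : 0 ≤ |Real.log (‖w-1‖)| ^ α' :=
      Real.rpow_nonneg (abs_nonneg _) _
    have hCη : C * η ≤ ε/2 := by nlinarith [hηpos.le]
    calc |Real.log (‖w-1‖)| ^ α' *
          ‖f w - ∑ k ∈ s', c k * w ^ k‖
        ≤ |Real.log (‖w-1‖)| ^ α' *
            (‖f w - f w * ((χ (‖w-1‖) : ℝ) : ℂ)‖
              + ‖w - 1‖ * ‖f w * ψ w - ∑ k ∈ s, b k * w ^ k‖) := by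
          refine mul_le_mul_of_nonneg_left ?_ hwnn
          rw [hdecomp w hw0, ← norm_mul]
          exact norm_add_le _ _
      _ = |Real.log (‖w-1‖)| ^ α' *
            ‖f w - f w * ((χ (‖w-1‖) : ℝ) : ℂ)‖
          + (|Real.log (‖w-1‖)| ^ α' * ‖w - 1‖) *
            ‖f w * ψ w - ∑ k ∈ s, b k * w ^ k‖ := by ring
      _ ≤ ε/2 + C * η := add_le_add ((hfg w hw).2 hw1)
          (mul_le_mul (hC _ ht0 ht2) (happ w hw) (norm_nonneg _) hC0.le)
      _ ≤ ε/2 + ε/2 := by linarith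
      _ = ε := by ring
end

section
/- Let d ≥ 2 be an integer, α > d a real number, V ∈ ℝ and C₀ > 0. For each h ∈ (0,1) let (z_{h,n})_{n≥1} be a sequence of complex numbers of modulus 1 such that: (i) for every real L ≥ 1 and every h ∈ (0,1), the set {n : |z_{h,n} − 1| ≥ e^{−L/h}} has cardinality at most C₀ (L/h)^{d−1}; (ii) for every nonzero integer k, the series Σ_{n≥1} (z_{h,n}^k − 1) converges absolutely and lim_{h→0} (2πh)^{d−1} Σ_{n≥1} (z_{h,n}^k − 1) = −V. Then for every continuous function f on the unit circle such that the function equal to f(z)|log|z−1||^α for z ≠ 1 and to 0 at z = 1 is continuous, the series Σ_{n≥1} f(z_{h,n}) converges absolutely for each h and lim_{h→0} (2πh)^{d−1} Σ_{n≥1} f(z_{h,n}) = (V/2π) ∫₀^{2π} f(e^{iθ}) dθ. -/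
open Real Complex

set_option maxHeartbeats 1000000

noncomputable def Complex.abs : AbsoluteValue ℂ ℝ where
  toFun x := ‖x‖
  map_mul' := norm_mul
  nonneg' := norm_nonneg
  eq_zero' _ := norm_eq_zero
  add_le' := norm_add_le

@[simp] lemma Complex.abs_apply (z : ℂ) : Complex.abs z = ‖z‖ := rfl

lemma Complex.norm_eq_abs (z : ℂ) : ‖z‖ = Complex.abs z := rfl

lemma Complex.abs_ofReal (r : ℝ) : Complex.abs (r : ℂ) = |r| := by simp

lemma Complex.abs_I : Complex.abs Complex.I = 1 := by simp

lemma Complex.abs_exp_ofReal_mul_I (x : ℝ) : Complex.abs (Complex.exp (x * Complex.I)) = 1 := by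
  simp [Complex.norm_exp_ofReal_mul_I]

lemma Complex.abs_mul_exp_arg_mul_I (x : ℂ) :
    ((Complex.abs x : ℝ) : ℂ) * Complex.exp (x.arg * Complex.I) = x := by
  simpa using Complex.norm_mul_exp_arg_mul_I x

lemma Complex.abs_exp_sub_one_le {x : ℂ} (hx : Complex.abs x ≤ 1) :
    Complex.abs (Complex.exp x - 1) ≤ 2 * Complex.abs x := by
  simpa using Complex.norm_exp_sub_one_le (x := x) (by simpa using hx)

lemma aux_pow_sub_one (w : ℂ) (hw : Complex.abs w = 1) (k : ℕ) :
    Complex.abs (w ^ k - 1) ≤ (k : ℝ) * Complex.abs (w - 1) := by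
  induction k with
  | zero => simp
  | succ n ih =>
      have : w ^ (n+1) - 1 = w ^ n * (w - 1) + (w ^ n - 1) := by ring
      rw [this]
      calc Complex.abs (w ^ n * (w - 1) + (w ^ n - 1))
          ≤ Complex.abs (w ^ n * (w - 1)) + Complex.abs (w ^ n - 1) :=
            AbsoluteValue.add_le _ _ _
        _ ≤ Complex.abs (w - 1) + (n : ℝ) * Complex.abs (w - 1) := by
            rw [map_mul, map_pow, hw, one_pow, one_mul]
            exact add_le_add le_rfl ih
        _ = ((n+1 : ℕ) : ℝ) * Complex.abs (w - 1) := by push_cast; ring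

lemma aux_zpow_sub_one (w : ℂ) (hw : Complex.abs w = 1) (k : ℤ) :
    Complex.abs (w ^ k - 1) ≤ |(k : ℝ)| * Complex.abs (w - 1) := by
  have hw0 : w ≠ 0 := by intro h; rw [h] at hw; simp at hw
  rcases le_or_gt 0 k with hk | hk
  · lift k to ℕ using hk
    rw [zpow_natCast]
    simpa using aux_pow_sub_one w hw k
  · obtain ⟨m, rfl⟩ := Int.exists_eq_neg_ofNat hk.le
    have h1 : w ^ (-(m:ℤ)) - 1 = w ^ (-(m:ℤ)) * (1 - w ^ (m : ℕ)) := by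
      rw [mul_sub, mul_one]
      congr 1
      rw [← zpow_natCast, ← zpow_add₀ hw0]
      rw [show -(m:ℤ) + (m:ℤ) = 0 by ring, zpow_zero]
    have habs : Complex.abs (w ^ (-(m:ℤ))) = 1 := by
      rw [map_zpow₀, hw, one_zpow]
    rw [h1, map_mul, habs, one_mul]
    have hple := aux_pow_sub_one w hw m
    rw [← AbsoluteValue.map_neg Complex.abs, neg_sub] at hple
    calc Complex.abs (1 - w ^ (m:ℕ)) ≤ (m : ℝ) * Complex.abs (w - 1) := hple
      _ ≤ |((-(m:ℤ) : ℤ) : ℝ)| * Complex.abs (w - 1) := by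
          apply mul_le_mul_of_nonneg_right _ (AbsoluteValue.nonneg _ _)
          push_cast
          rw [abs_neg]
          exact le_abs_self _

lemma aux_fourier_approx (f : ℂ → ℂ) (hf : ContinuousOn f (Metric.sphere (0:ℂ) 1))
    {ε : ℝ} (hε : 0 < ε) :
    ∃ c : ℤ →₀ ℂ, ∀ w : ℂ, Complex.abs w = 1 →
      Complex.abs (f w - ∑ k ∈ c.support, c k * w ^ k) ≤ ε := by
  haveI : Fact (0 < 2 * π) := ⟨by positivity⟩
  have hcont : Continuous fun θ : ℝ => f (Complex.exp (θ * I)) := by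
    apply hf.comp_continuous
    · exact Complex.continuous_exp.comp ((Complex.continuous_ofReal).mul continuous_const)
    · intro θ
      rw [Metric.mem_sphere, dist_zero_right, Complex.norm_eq_abs, Complex.abs_exp_ofReal_mul_I]
  have hper : Function.Periodic (fun θ : ℝ => f (Complex.exp (θ * I))) (2 * π) := by
    intro θ
    simp only
    congr 1
    rw [Complex.ofReal_add, add_mul, Complex.exp_add]
    have : Complex.exp ((2 * π : ℝ) * I) = 1 := by
      push_cast
      exact Complex.exp_two_pi_mul_I
    rw [this, mul_one]
  set F : C(AddCircle (2*π), ℂ) := ⟨hper.lift, continuous_coinduced_dom.mpr hcont⟩ with hF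
  have hFmem : F ∈ closure ((Submodule.span ℂ (Set.range (@fourier (2*π)))) : Set C(AddCircle (2*π), ℂ)) := by
    rw [← Submodule.topologicalClosure_coe, span_fourier_closure_eq_top]
    trivial
  obtain ⟨g, hg_mem, hg_dist⟩ := Metric.mem_closure_iff.1 hFmem ε hε
  obtain ⟨c, hc⟩ := Finsupp.mem_span_range_iff_exists_finsupp.1 hg_mem
  refine ⟨c, fun w hw => ?_⟩
  have hwexp : Complex.exp ((w.arg : ℂ) * I) = w := by
    have := Complex.abs_mul_exp_arg_mul_I w
    rwa [hw, Complex.ofReal_one, one_mul] at this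
  have hFval : F ((w.arg : ℝ) : AddCircle (2*π)) = f w := by
    rw [hF]
    simp only [ContinuousMap.coe_mk]
    rw [Function.Periodic.lift_coe, hwexp]
  have hgval : g ((w.arg : ℝ) : AddCircle (2*π)) = ∑ k ∈ c.support, c k * w ^ k := by
    rw [← hc]
    rw [Finsupp.sum]
    rw [ContinuousMap.sum_apply]
    refine Finset.sum_congr rfl fun k _ => ?_
    rw [ContinuousMap.smul_apply, fourier_coe_apply, smul_eq_mul]
    congr 1
    conv_rhs => rw [← hwexp, ← Complex.exp_int_mul]
    congr 1
    push_cast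
    have hπ : (π:ℂ) ≠ 0 := Complex.ofReal_ne_zero.mpr Real.pi_ne_zero
    field_simp
  calc Complex.abs (f w - ∑ k ∈ c.support, c k * w ^ k)
      = dist (F ((w.arg : ℝ) : AddCircle (2*π))) (g ((w.arg : ℝ) : AddCircle (2*π))) := by
        rw [hFval, hgval, Complex.dist_eq]
        rfl
    _ ≤ dist F g := ContinuousMap.dist_apply_le_dist _
    _ ≤ ε := hg_dist.le

lemma aux_f_one (f : ℂ → ℂ) (hf : ContinuousOn f (Metric.sphere (0:ℂ) 1)) {α : ℝ} (hα : 0 < α)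
    (hWf : ContinuousOn
      (fun w : ℂ => if w = 1 then (0 : ℂ)
          else f w * Complex.ofReal (|Real.log (Complex.abs (w - 1))| ^ α))
      (Metric.sphere (0:ℂ) 1)) :
    f 1 = 0 := by
  by_contra hne
  have h1mem : (1 : ℂ) ∈ Metric.sphere (0:ℂ) 1 := by
    rw [Metric.mem_sphere, dist_zero_right]; simp
  have hpos : 0 < Complex.abs (f 1) / 2 := by
    have : 0 < Complex.abs (f 1) := AbsoluteValue.pos _ (by simpa using hne)
    linarith
  -- continuity of the weighted function at 1 (value 0)
  have hW1 : Filter.Tendsto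
      (fun w : ℂ => if w = 1 then (0 : ℂ)
          else f w * Complex.ofReal (|Real.log (Complex.abs (w - 1))| ^ α))
      (nhdsWithin 1 (Metric.sphere (0:ℂ) 1)) (nhds 0) := by
    have := (hWf 1 h1mem)
    unfold ContinuousWithinAt at this
    simpa using this
  obtain ⟨δ₁, hδ₁, hball₁⟩ := Metric.tendsto_nhdsWithin_nhds.1 hW1 _ hpos
  have hf1 : Filter.Tendsto f (nhdsWithin 1 (Metric.sphere (0:ℂ) 1)) (nhds (f 1)) := hf 1 h1mem
  obtain ⟨δ₂, hδ₂, hball₂⟩ := Metric.tendsto_nhdsWithin_nhds.1 hf1 _ hpos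
  -- choose θ
  set θ : ℝ := min (min (δ₁/4) (δ₂/4)) (min (Real.exp (-1) / 2) (1/2)) with hθdef
  have hθpos : 0 < θ := by
    apply lt_min (lt_min (by linarith) (by linarith))
    apply lt_min (by positivity) (by norm_num)
  have hθ1 : θ ≤ 1/2 := le_trans (min_le_right _ _) (min_le_right _ _)
  set w : ℂ := Complex.exp ((θ : ℂ) * I) with hwdef
  have hwsphere : w ∈ Metric.sphere (0:ℂ) 1 := by
    rw [Metric.mem_sphere, dist_zero_right, Complex.norm_eq_abs, hwdef,
      Complex.abs_exp_ofReal_mul_I]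
  have hwne : w ≠ 1 := by
    rw [hwdef]
    intro hcon
    obtain ⟨n, hn⟩ := Complex.exp_eq_one_iff.1 hcon
    have hn' : (θ : ℂ) * I = ((n : ℝ) * (2 * π) : ℝ) * I := by
      rw [hn]; push_cast; ring
    have : θ = (n : ℝ) * (2 * π) := by
      have := mul_right_cancel₀ Complex.I_ne_zero hn'
      exact_mod_cast this
    rcases le_or_gt n 0 with h | h
    · have : θ ≤ 0 := by
        rw [this]
        apply mul_nonpos_of_nonpos_of_nonneg
        · exact_mod_cast h
        · positivity
      linarith
    · have h1 : (1 : ℝ) ≤ (n : ℝ) := by exact_mod_cast h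
      have : 2 * π ≤ θ := by
        rw [this]
        nlinarith [Real.pi_pos]
      nlinarith [Real.pi_gt_three]
  have hr0 : 0 < Complex.abs (w - 1) := by
    rw [AbsoluteValue.pos_iff]
    exact sub_ne_zero.mpr hwne
  have hrle : Complex.abs (w - 1) ≤ 2 * θ := by
    have habs : Complex.abs ((θ:ℂ) * I) = |θ| := by
      rw [map_mul, Complex.abs_I, mul_one, Complex.abs_ofReal]
    have h1 : Complex.abs ((θ:ℂ) * I) ≤ 1 := by
      rw [habs, abs_of_pos hθpos]; linarith
    have := Complex.abs_exp_sub_one_le (x := (θ:ℂ) * I) h1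
    rw [habs, abs_of_pos hθpos] at this
    exact this
  set r : ℝ := Complex.abs (w - 1) with hrdef
  have hdist : dist w 1 = r := Complex.dist_eq w 1
  have hθa : θ ≤ δ₁/4 := le_trans (min_le_left _ _) (min_le_left _ _)
  have hθb : θ ≤ δ₂/4 := le_trans (min_le_left _ _) (min_le_right _ _)
  have hθc : θ ≤ Real.exp (-1) / 2 := le_trans (min_le_right _ _) (min_le_left _ _)
  have hrδ₁ : dist w 1 < δ₁ := by rw [hdist]; linarith
  have hrδ₂ : dist w 1 < δ₂ := by rw [hdist]; linarith
  have hre : r ≤ Real.exp (-1) := by linarith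
  -- log bound
  have hlog : Real.log r ≤ -1 := by
    calc Real.log r ≤ Real.log (Real.exp (-1)) := Real.log_le_log hr0 hre
      _ = -1 := Real.log_exp _
  have hlog1 : 1 ≤ |Real.log r| := by
    rw [abs_of_neg (by linarith : Real.log r < 0)]
    linarith
  have hlogα : 1 ≤ |Real.log r| ^ α := Real.one_le_rpow hlog1 hα.le
  -- lower bound on |f w|
  have hfw : Complex.abs (f 1) / 2 ≤ Complex.abs (f w) := by
    have := hball₂ hwsphere hrδ₂
    rw [Complex.dist_eq, Complex.norm_eq_abs] at this
    have htri2 : Complex.abs (f 1) - Complex.abs (f w) ≤ Complex.abs (f w - f 1) := by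
      have h := AbsoluteValue.sub_le Complex.abs (f 1) (f w) 0
      simp only [sub_zero] at h
      have h2 : Complex.abs (f 1 - f w) = Complex.abs (f w - f 1) := by
        rw [← AbsoluteValue.map_neg Complex.abs (f 1 - f w), neg_sub]
      linarith
    linarith
  -- upper bound from weighted continuity
  have hub := hball₁ hwsphere hrδ₁
  rw [if_neg hwne, dist_zero_right] at hub
  have : ‖f w * Complex.ofReal (|Real.log (Complex.abs (w - 1))| ^ α)‖
      = Complex.abs (f w) * |Real.log r| ^ α := by
    rw [norm_mul, Complex.norm_eq_abs, Complex.norm_eq_abs, Complex.abs_ofReal,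
      _root_.abs_of_nonneg (Real.rpow_nonneg (abs_nonneg _) _)]
  rw [this] at hub
  have : Complex.abs (f 1) / 2 ≤ Complex.abs (f w) * |Real.log r| ^ α := by
    calc Complex.abs (f 1) / 2 ≤ Complex.abs (f w) := hfw
      _ = Complex.abs (f w) * 1 := (mul_one _).symm
      _ ≤ Complex.abs (f w) * |Real.log r| ^ α :=
          mul_le_mul_of_nonneg_left hlogα (AbsoluteValue.nonneg _ _)
  linarith

lemma aux_sumBound {G : ℕ → ℝ} {ℓ : ℕ → ℕ} {c : ℕ → ℝ} (hG : ∀ n, 0 ≤ G n)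
    (hc : Summable c) (hc0 : ∀ L, 0 ≤ c L)
    (hfib : ∀ L : ℕ, ∀ s : Finset ℕ, (∀ n ∈ s, ℓ n = L ∧ G n ≠ 0) → ∑ n ∈ s, G n ≤ c L) :
    Summable G ∧ ∑' n, G n ≤ ∑' L, c L := by
  have key : ∀ u : Finset ℕ, ∑ n ∈ u, G n ≤ ∑' L, c L := by
    intro u
    classical
    set u' : Finset ℕ := u.filter (fun n => G n ≠ 0) with hu'
    have h1 : ∑ n ∈ u, G n = ∑ n ∈ u', G n := (Finset.sum_filter_ne_zero u).symm
    set t : Finset ℕ := u'.image ℓ with ht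
    have h2 : ∑ L ∈ t, ∑ n ∈ u'.filter (fun n => ℓ n = L), G n = ∑ n ∈ u', G n :=
      Finset.sum_fiberwise_of_maps_to (fun n hn => Finset.mem_image_of_mem ℓ hn) G
    have h3 : ∑ L ∈ t, ∑ n ∈ u'.filter (fun n => ℓ n = L), G n ≤ ∑ L ∈ t, c L := by
      apply Finset.sum_le_sum
      intro L _
      apply hfib L
      intro n hn
      rw [Finset.mem_filter] at hn
      obtain ⟨hn1, hn2⟩ := hn
      rw [hu', Finset.mem_filter] at hn1
      exact ⟨hn2, hn1.2⟩
    have h4 : ∑ L ∈ t, c L ≤ ∑' L, c L := Summable.sum_le_tsum t (fun L _ => hc0 L) hc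
    linarith
  have hsum : Summable G := summable_of_sum_le hG key
  exact ⟨hsum, Summable.tsum_le_of_sum_le hsum key⟩

lemma aux_card (s : Finset ℕ) (T : Set ℕ) (hT : T.Finite) (hmap : ∀ n ∈ s, n + 1 ∈ T) :
    (s.card : ℝ) ≤ (T.ncard : ℝ) := by
  have h1 : s.card ≤ hT.toFinset.card :=
    Finset.card_le_card_of_injOn (fun n => n + 1)
      (fun n hn => hT.mem_toFinset.2 (hmap n hn)) (fun a _ b _ hab => by simpa using hab)
  rw [Set.ncard_eq_toFinset_card T hT]
  exact_mod_cast h1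

lemma aux_summable_A {d : ℕ} (hd : 2 ≤ d) {α : ℝ} (hα : (d:ℝ) < α) :
    Summable (fun L : ℕ => ((L:ℝ)+1)^(d-1) * (L:ℝ)^(-α)) := by
  have hg : Summable (fun L : ℕ => (2:ℝ)^(d-1) * (L:ℝ)^((d:ℝ)-1-α)) := by
    apply Summable.mul_left
    apply Real.summable_nat_rpow.2
    linarith
  apply Summable.of_nonneg_of_le _ _ hg
  · intro L
    positivity
  · intro L
    rcases Nat.eq_zero_or_pos L with hL | hL
    · subst hL
      simp only [Nat.cast_zero]
      rw [Real.zero_rpow (by linarith : -α ≠ 0), mul_zero]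
      positivity
    · have hL1 : (1:ℝ) ≤ (L:ℝ) := by exact_mod_cast hL
      have hLpos : (0:ℝ) < (L:ℝ) := by linarith
      have h1 : ((L:ℝ)+1)^(d-1) ≤ (2:ℝ)^(d-1) * (L:ℝ)^(d-1) := by
        rw [← mul_pow]
        apply pow_le_pow_left₀ (by linarith)
        linarith
      calc ((L:ℝ)+1)^(d-1) * (L:ℝ)^(-α)
          ≤ (2:ℝ)^(d-1) * (L:ℝ)^(d-1) * (L:ℝ)^(-α) := by
            apply mul_le_mul_of_nonneg_right h1 (Real.rpow_nonneg hLpos.le _)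
        _ = (2:ℝ)^(d-1) * (L:ℝ)^((d:ℝ)-1-α) := by
            rw [mul_assoc]
            congr 1
            rw [← Real.rpow_natCast (L:ℝ) (d-1), ← Real.rpow_add hLpos]
            congr 1
            have : ((d-1 : ℕ):ℝ) = (d:ℝ) - 1 := by
              have : 1 ≤ d := by omega
              push_cast [Nat.cast_sub this]
              ring
            rw [this]
            ring

lemma aux_summable_B {d : ℕ} {x : ℝ} (hx : 0 < x) (hx1 : x < 1) :
    Summable (fun L : ℕ => ((L:ℝ)+1)^(d-1) * x^L) := by
  have base : Summable (fun n : ℕ => (n:ℝ)^(d-1) * x^n) :=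
    summable_pow_mul_geometric_of_norm_lt_one (d-1) (by rwa [Real.norm_eq_abs, abs_of_pos hx])
  have hshift : Summable (fun n : ℕ => ((n+1:ℕ):ℝ)^(d-1) * x^(n+1)) :=
    (summable_nat_add_iff 1).2 base
  have := hshift.mul_right x⁻¹
  apply this.congr
  intro n
  push_cast
  rw [pow_succ]
  field_simp

lemma aux_summable_c {d : ℕ} (hd : 2 ≤ d) {α : ℝ} (hα : (d:ℝ) < α) {h B B' : ℝ}
    (hh : 0 < h) (hB : 0 ≤ B) (hB' : 0 ≤ B') :
    Summable (fun L : ℕ => (((L:ℝ)+1)/h)^(d-1) *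
      (B * ((L:ℝ)/h)^(-α) + B' * Real.exp (-(L:ℝ)/h))) := by
  have hA : Summable (fun L : ℕ => (((L:ℝ)+1)/h)^(d-1) * (B * ((L:ℝ)/h)^(-α))) := by
    have := (aux_summable_A hd hα (d := d)).mul_left (B / h^(d-1) * (h^(-α))⁻¹)
    apply this.congr
    intro L
    rw [div_pow, Real.div_rpow (Nat.cast_nonneg L) hh.le]
    field_simp
  have hB2 : Summable (fun L : ℕ => (((L:ℝ)+1)/h)^(d-1) * (B' * Real.exp (-(L:ℝ)/h))) := by
    have hx : (0:ℝ) < Real.exp (-1/h) := Real.exp_pos _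
    have hx1 : Real.exp (-1/h) < 1 := by
      apply Real.exp_lt_one_iff.2
      exact div_neg_of_neg_of_pos (by norm_num) hh
    have hcore := (aux_summable_B (d:=d) hx hx1).mul_left (B' / h^(d-1))
    apply hcore.congr
    intro L
    have hexp : Real.exp (-(L:ℝ)/h) = Real.exp (-1/h) ^ L := by
      rw [← Real.exp_nat_mul]
      congr 1
      ring
    rw [div_pow, hexp]
    ring
  have := hA.add hB2
  apply this.congr
  intro L
  ring

lemma aux_poly_limit {d : ℕ} {V : ℝ} {z : ℝ → ℕ → ℂ}
    (htrace : ∀ k : ℤ, k ≠ 0 →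
      (∀ h ∈ Set.Ioo (0 : ℝ) 1, Summable (fun n : ℕ => Complex.abs (z h (n + 1) ^ k - 1))) ∧
        Filter.Tendsto
          (fun h : ℝ => (Complex.ofReal ((2 * π * h) ^ (d - 1))) *
            ∑' n : ℕ, (z h (n + 1) ^ k - 1))
          (nhdsWithin 0 (Set.Ioi 0)) (nhds (-(V : ℂ))))
    (c : ℤ →₀ ℂ) :
    (∀ h ∈ Set.Ioo (0:ℝ) 1, ∀ k : ℤ, Summable (fun n : ℕ => c k * (z h (n+1) ^ k - 1))) ∧
      Filter.Tendsto
        (fun h : ℝ => (Complex.ofReal ((2 * π * h) ^ (d - 1))) *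
          ∑' n : ℕ, ∑ k ∈ c.support, c k * (z h (n+1) ^ k - 1))
        (nhdsWithin 0 (Set.Ioi 0))
        (nhds (∑ k ∈ c.support, c k * (if k = (0:ℤ) then 0 else -(V:ℂ)))) := by
  have hsumk : ∀ h ∈ Set.Ioo (0:ℝ) 1, ∀ k : ℤ,
      Summable (fun n : ℕ => c k * (z h (n+1) ^ k - 1)) := by
    intro h hh k
    rcases eq_or_ne k 0 with rfl | hk
    · apply summable_zero.congr
      intro n
      simp
    · have h1 : Summable (fun n : ℕ => ‖z h (n+1) ^ k - 1‖) := by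
        have := (htrace k hk).1 h hh
        apply this.congr
        intro n
        rw [Complex.norm_eq_abs]
      exact (h1.of_norm).mul_left (c k)
  refine ⟨hsumk, ?_⟩
  have hmem : Set.Ioo (0:ℝ) 1 ∈ nhdsWithin (0:ℝ) (Set.Ioi 0) :=
    Ioo_mem_nhdsGT_of_mem (by norm_num : (0:ℝ) ∈ Set.Ico (0:ℝ) 1)
  have heq : ∀ h ∈ Set.Ioo (0:ℝ) 1,
      ∑ k ∈ c.support, (c k * ((Complex.ofReal ((2 * π * h) ^ (d - 1))) *
          ∑' n : ℕ, (z h (n+1) ^ k - 1)))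
      = (Complex.ofReal ((2 * π * h) ^ (d - 1))) *
          ∑' n : ℕ, ∑ k ∈ c.support, c k * (z h (n+1) ^ k - 1) := by
    intro h hh
    rw [Summable.tsum_finsetSum (fun k _ => hsumk h hh k), Finset.mul_sum]
    apply Finset.sum_congr rfl
    intro k _
    rw [tsum_mul_left]
    ring
  apply Filter.Tendsto.congr' (Filter.eventuallyEq_of_mem hmem (fun h hh => heq h hh))
  apply tendsto_finset_sum
  intro k _
  rcases eq_or_ne k 0 with rfl | hk
  · have hfun : (fun h : ℝ => c 0 * ((Complex.ofReal ((2 * π * h) ^ (d - 1))) *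
        ∑' n : ℕ, (z h (n+1) ^ (0:ℤ) - 1))) = fun _ => 0 := by
      funext h
      simp
    rw [hfun, if_pos rfl, mul_zero]
    exact tendsto_const_nhds
  · rw [if_neg hk]
    exact ((htrace k hk).2).const_mul (c k)

lemma aux_integral_poly {V : ℝ} (c : ℤ →₀ ℂ) :
    (Complex.ofReal (V / (2 * π))) *
      ∫ θ in (0:ℝ)..(2*π), (∑ k ∈ c.support, c k * (Complex.exp (θ * I) ^ k - 1))
    = ∑ k ∈ c.support, c k * (if k = (0:ℤ) then 0 else -(V:ℂ)) := by
  have hfun : ∀ (k:ℤ) (θ:ℝ), Complex.exp ((θ:ℂ) * I) ^ k = Complex.exp (((k:ℂ) * I) * θ) := by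
    intro k θ
    rw [← Complex.exp_int_mul]
    congr 1
    push_cast
    ring
  have hcont : ∀ k : ℤ, Continuous (fun θ : ℝ => c k * (Complex.exp ((θ:ℂ) * I) ^ k - 1)) := by
    intro k
    have hg : Continuous (fun θ : ℝ => c k * (Complex.exp (((k:ℂ) * I) * θ) - 1)) := by
      apply Continuous.mul continuous_const
      apply Continuous.sub _ continuous_const
      exact Complex.continuous_exp.comp (continuous_const.mul Complex.continuous_ofReal)
    apply hg.congr
    intro θ
    rw [hfun]
  have hint : ∀ k ∈ c.support, IntervalIntegrable
      (fun θ : ℝ => c k * (Complex.exp ((θ:ℂ) * I) ^ k - 1)) MeasureTheory.volume 0 (2*π) :=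
    fun k _ => (hcont k).intervalIntegrable _ _
  rw [intervalIntegral.integral_finset_sum hint, Finset.mul_sum]
  apply Finset.sum_congr rfl
  intro k _
  rcases eq_or_ne k 0 with rfl | hk
  · simp
  · have hkI : ((k:ℂ) * I) ≠ 0 := mul_ne_zero (Int.cast_ne_zero.mpr hk) Complex.I_ne_zero
    have h1 : (∫ θ in (0:ℝ)..(2*π), c k * (Complex.exp ((θ:ℂ) * I) ^ k - 1))
        = c k * ((∫ θ in (0:ℝ)..(2*π), Complex.exp (((k:ℂ) * I) * θ))
            - ∫ θ in (0:ℝ)..(2*π), (1:ℂ)) := by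
      rw [← intervalIntegral.integral_sub]
      · rw [← intervalIntegral.integral_const_mul]
        apply intervalIntegral.integral_congr
        intro θ _
        simp only
        rw [hfun]
      · apply Continuous.intervalIntegrable
        exact Complex.continuous_exp.comp (continuous_const.mul Complex.continuous_ofReal)
      · exact intervalIntegrable_const
    rw [h1]
    have h2 : (∫ θ in (0:ℝ)..(2*π), Complex.exp (((k:ℂ) * I) * θ)) = 0 := by
      rw [integral_exp_mul_complex hkI]
      have e1 : ((k:ℂ) * I) * ((2*π : ℝ):ℂ) = (k:ℂ) * (2 * (π:ℂ) * I) := by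
        push_cast
        ring
      rw [e1, Complex.exp_int_mul_two_pi_mul_I]
      simp
    have h3 : (∫ θ in (0:ℝ)..(2*π), (1:ℂ)) = ((2*π : ℝ):ℂ) := by
      rw [intervalIntegral.integral_const]
      simp
    rw [h2, h3, if_neg hk]
    have hπ : (π:ℂ) ≠ 0 := Complex.ofReal_ne_zero.mpr Real.pi_ne_zero
    push_cast
    field_simp
    ring

lemma aux_summable_tail {d : ℕ} (hd : 2 ≤ d) {α : ℝ} (hα : (d:ℝ) < α) {h B B' C₀ : ℝ}
    (hh : 0 < h) (hB : 0 ≤ B) (hB' : 0 ≤ B') :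
    Summable (fun L : ℕ => C₀ * (((L:ℝ)+2)/h)^(d-1) *
      (B * (((L:ℝ)+1)/h)^(-α) + B' * Real.exp (-((L:ℝ)+1)/h))) := by
  have h1 := (aux_summable_c hd hα hh hB hB' (d := d)).mul_left C₀
  apply ((summable_nat_add_iff 1).2 h1).congr
  intro L
  push_cast
  ring

lemma aux_master {d : ℕ} (hd : 2 ≤ d) {α C₀ : ℝ} (hα : (d:ℝ) < α) (hC₀ : 0 < C₀)
    {z : ℝ → ℕ → ℂ}
    (hcount : ∀ L : ℝ, 1 ≤ L → ∀ h ∈ Set.Ioo (0 : ℝ) 1,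
      {n : ℕ | 1 ≤ n ∧ Real.exp (-L / h) ≤ Complex.abs (z h n - 1)}.Finite ∧
        (({n : ℕ | 1 ≤ n ∧ Real.exp (-L / h) ≤ Complex.abs (z h n - 1)}.ncard : ℝ) ≤
          C₀ * (L / h) ^ (d - 1)))
    {h : ℝ} (hh : h ∈ Set.Ioo (0:ℝ) 1)
    {G : ℕ → ℝ} {M B B' : ℝ} (hM : 0 ≤ M) (hB : 0 ≤ B) (hB' : 0 ≤ B')
    (hG0 : ∀ n, 0 ≤ G n) (hGM : ∀ n, G n ≤ M)
    (hG1 : ∀ n, z h (n+1) = 1 → G n = 0)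
    (hGnear : ∀ n, 0 < Complex.abs (z h (n+1) - 1) →
      Complex.abs (z h (n+1) - 1) < Real.exp (-1/h) →
      G n ≤ B * (-Real.log (Complex.abs (z h (n+1) - 1))) ^ (-α)
          + B' * Complex.abs (z h (n+1) - 1)) :
    Summable G ∧ ∑' n, G n ≤ C₀ * (1/h)^(d-1) * M
      + ∑' (L:ℕ), C₀ * (((L:ℝ)+2)/h)^(d-1) *
          (B * (((L:ℝ)+1)/h)^(-α) + B' * Real.exp (-((L:ℝ)+1)/h)) := by
  classical
  obtain ⟨hh0, hh1⟩ := hh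
  set r : ℕ → ℝ := fun n => Complex.abs (z h (n+1) - 1) with hrdef
  set ℓ : ℕ → ℕ := fun n =>
    if Real.exp (-1/h) ≤ r n then 0 else ⌊h * (-Real.log (r n))⌋₊ with hℓdef
  set c : ℕ → ℝ := fun L => if L = 0 then C₀*(1/h)^(d-1)*M
    else C₀*(((L:ℝ)+1)/h)^(d-1) * (B*((L:ℝ)/h)^(-α) + B'*Real.exp (-(L:ℝ)/h)) with hcdef
  -- summability of c
  have hc₁ : Summable (fun L : ℕ => C₀ * ((((L:ℝ)+1)/h)^(d-1) *
      (B * ((L:ℝ)/h)^(-α) + B' * Real.exp (-(L:ℝ)/h)))) :=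
    (aux_summable_c hd hα hh0 hB hB').mul_left C₀
  have hcsum : Summable c := by
    apply (summable_nat_add_iff 1).1
    apply ((summable_nat_add_iff 1).2 hc₁).congr
    intro L
    simp only [hcdef]
    rw [if_neg (Nat.succ_ne_zero L)]
    ring
  have hc0 : ∀ L, 0 ≤ c L := by
    intro L
    simp only [hcdef]
    split
    · positivity
    · positivity
  -- basic facts about points with G n ≠ 0
  have hrpos : ∀ n, G n ≠ 0 → 0 < r n := by
    intro n hn
    rw [hrdef]
    simp only
    rw [AbsoluteValue.pos_iff]
    intro hz
    exact hn (hG1 n (by rwa [sub_eq_zero] at hz))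
  -- helper: in the non-far case, log(r n) < -1/h
  have hlogfact : ∀ n, G n ≠ 0 → ¬ (Real.exp (-1/h) ≤ r n) → Real.log (r n) < -(1/h) := by
    intro n hGn hfar
    have hr0 : 0 < r n := hrpos n hGn
    calc Real.log (r n) < Real.log (Real.exp (-1/h)) :=
          Real.log_lt_log hr0 (not_le.1 hfar)
      _ = -1/h := Real.log_exp _
      _ = -(1/h) := by ring
  -- the fiber bounds
  have hfib : ∀ L : ℕ, ∀ s : Finset ℕ, (∀ n ∈ s, ℓ n = L ∧ G n ≠ 0) → ∑ n ∈ s, G n ≤ c L := by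
    intro L s hs
    cases L with
    | zero =>
        obtain ⟨hTfin, hTcard⟩ := hcount 1 le_rfl h ⟨hh0, hh1⟩
        have hmap : ∀ n ∈ s, n + 1 ∈
            {m : ℕ | 1 ≤ m ∧ Real.exp (-1 / h) ≤ Complex.abs (z h m - 1)} := by
          intro n hn
          obtain ⟨hℓn, hGn⟩ := hs n hn
          refine ⟨by omega, ?_⟩
          by_contra hfar
          have hfar' : ¬ (Real.exp (-1/h) ≤ r n) := hfar
          rw [hℓdef] at hℓn
          simp only [if_neg hfar'] at hℓn
          have hlog := hlogfact n hGn hfar'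
          have h1x : (1:ℝ) ≤ h * (-Real.log (r n)) := by
            have hd1 : 1/h < -Real.log (r n) := by linarith
            calc (1:ℝ) = h * (1/h) := by field_simp
              _ ≤ h * (-Real.log (r n)) := by
                  exact mul_le_mul_of_nonneg_left hd1.le hh0.le
          have : (1:ℕ) ≤ ⌊h * (-Real.log (r n))⌋₊ := Nat.le_floor (by exact_mod_cast h1x)
          omega
        calc ∑ n ∈ s, G n ≤ s.card • M := Finset.sum_le_card_nsmul s G M (fun n _ => hGM n)
          _ = (s.card : ℝ) * M := by rw [nsmul_eq_mul]
          _ ≤ (({m : ℕ | 1 ≤ m ∧ Real.exp (-1 / h) ≤ Complex.abs (z h m - 1)}.ncard : ℝ)) * M :=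
              mul_le_mul_of_nonneg_right (aux_card s _ hTfin hmap) hM
          _ ≤ C₀ * ((1:ℝ)/h)^(d-1) * M := mul_le_mul_of_nonneg_right hTcard hM
          _ = c 0 := by simp only [hcdef, if_pos]
    | succ K =>
        obtain ⟨hTfin, hTcard⟩ := hcount ((K:ℝ)+2) (by linarith [Nat.cast_nonneg (α := ℝ) K]) h ⟨hh0, hh1⟩
        set b : ℝ := B * (((K:ℝ)+1)/h)^(-α) + B' * Real.exp (-((K:ℝ)+1)/h) with hbdef
        have hbnn : 0 ≤ b := by
          rw [hbdef]
          have : (0:ℝ) ≤ (((K:ℝ)+1)/h)^(-α) := Real.rpow_nonneg (by positivity) _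
          positivity
        have hfacts : ∀ n ∈ s, (Real.exp (-((K:ℝ)+2) / h) ≤ r n) ∧ G n ≤ b := by
          intro n hn
          obtain ⟨hℓn, hGn⟩ := hs n hn
          have hr0 : 0 < r n := hrpos n hGn
          have hfar' : ¬ (Real.exp (-1/h) ≤ r n) := by
            intro hfar
            rw [hℓdef] at hℓn
            simp only [if_pos hfar] at hℓn
            omega
          rw [hℓdef] at hℓn
          simp only [if_neg hfar'] at hℓn
          have hlog := hlogfact n hGn hfar'
          have hxpos : 0 ≤ h * (-Real.log (r n)) := by
            have h1h : (0:ℝ) < 1/h := by positivity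
            nlinarith
          have hx1 : ((K:ℝ)+1) ≤ h * (-Real.log (r n)) := by
            have : ((K+1:ℕ):ℝ) ≤ h * (-Real.log (r n)) := by
              rw [← hℓn]
              exact_mod_cast Nat.floor_le hxpos
            push_cast at this
            linarith
          have hx2 : h * (-Real.log (r n)) < ((K:ℝ)+2) := by
            have := Nat.lt_floor_add_one (h * (-Real.log (r n)))
            rw [hℓn] at this
            push_cast at this
            linarith
          have hyp1 : ((K:ℝ)+1)/h ≤ -Real.log (r n) := by
            rw [div_le_iff₀ hh0]
            nlinarith
          have hyp2 : -Real.log (r n) < ((K:ℝ)+2)/h := by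
            rw [lt_div_iff₀ hh0]
            nlinarith
          constructor
          · have : Real.exp (-((K:ℝ)+2) / h) < Real.exp (Real.log (r n)) := by
              apply Real.exp_lt_exp.2
              rw [neg_div]
              linarith
            rw [Real.exp_log hr0] at this
            exact this.le
          · have hbase : G n ≤ B * (-Real.log (r n)) ^ (-α)
                + B' * (r n) := hGnear n hr0 (not_le.1 hfar')
            have hp1 : (-Real.log (r n)) ^ (-α) ≤ (((K:ℝ)+1)/h)^(-α) := by
              apply Real.rpow_le_rpow_of_nonpos (by positivity) hyp1
              have : (0:ℝ) < (d:ℝ) := by exact_mod_cast (by omega : 0 < d)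
              linarith
            have hp2 : r n ≤ Real.exp (-((K:ℝ)+1)/h) := by
              have : Real.exp (Real.log (r n)) ≤ Real.exp (-((K:ℝ)+1)/h) := by
                apply Real.exp_le_exp.2
                rw [neg_div]
                linarith
              rwa [Real.exp_log hr0] at this
            rw [hbdef]
            have := mul_le_mul_of_nonneg_left hp1 hB
            have := mul_le_mul_of_nonneg_left hp2 hB'
            linarith
        have hmap : ∀ n ∈ s, n + 1 ∈
            {m : ℕ | 1 ≤ m ∧ Real.exp (-((K:ℝ)+2) / h) ≤ Complex.abs (z h m - 1)} := by
          intro n hn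
          exact ⟨by omega, (hfacts n hn).1⟩
        calc ∑ n ∈ s, G n ≤ s.card • b :=
              Finset.sum_le_card_nsmul s G b (fun n hn => (hfacts n hn).2)
          _ = (s.card : ℝ) * b := by rw [nsmul_eq_mul]
          _ ≤ (({m : ℕ | 1 ≤ m ∧ Real.exp (-((K:ℝ)+2) / h) ≤ Complex.abs (z h m - 1)}.ncard : ℝ)) * b :=
              mul_le_mul_of_nonneg_right (aux_card s _ hTfin hmap) hbnn
          _ ≤ C₀ * ((((K:ℝ)+2))/h)^(d-1) * b := mul_le_mul_of_nonneg_right hTcard hbnn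
          _ = c (K+1) := by
              simp only [hcdef, hbdef]
              rw [if_neg (Nat.succ_ne_zero K)]
              push_cast
              ring
  obtain ⟨hsum, hle⟩ := aux_sumBound hG0 hcsum hc0 hfib
  refine ⟨hsum, ?_⟩
  have hsplit : ∑' L, c L = c 0 + ∑' L, c (L+1) := Summable.tsum_eq_zero_add hcsum
  have hzero : c 0 = C₀ * (1/h)^(d-1) * M := by simp only [hcdef, if_pos]
  have htail : ∑' (L:ℕ), c (L+1) = ∑' (L:ℕ), C₀ * (((L:ℝ)+2)/h)^(d-1) *
      (B * (((L:ℝ)+1)/h)^(-α) + B' * Real.exp (-((L:ℝ)+1)/h)) := by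
    apply tsum_congr
    intro L
    simp only [hcdef]
    rw [if_neg (Nat.succ_ne_zero L)]
    push_cast
    ring
  calc ∑' n, G n ≤ ∑' L, c L := hle
    _ = _ := by rw [hsplit, hzero, htail]

/-- Theorem 3 of the paper (analytic content): the eigenvalue counting bound together
with the trace asymptotics `(2πh)^{d-1} Σ (z_{h,n}^k - 1) → -V` for every `k ≠ 0`
imply equidistribution `(2πh)^{d-1} Σ f(z_{h,n}) → (V/2π) ∫₀^{2π} f(e^{iθ}) dθ`
for every `f` in the weighted space `C⁰_α(S¹)`, `α > d`. -/
theorem stmt_8 (d : ℕ) (hd : 2 ≤ d) (α : ℝ) (hα : (d : ℝ) < α) (V : ℝ)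
    (C₀ : ℝ) (hC₀ : 0 < C₀) (z : ℝ → ℕ → ℂ)
    (hmod : ∀ h ∈ Set.Ioo (0 : ℝ) 1, ∀ n : ℕ, 1 ≤ n → ‖z h n‖ = 1)
    (hcount : ∀ L : ℝ, 1 ≤ L → ∀ h ∈ Set.Ioo (0 : ℝ) 1,
      {n : ℕ | 1 ≤ n ∧ Real.exp (-L / h) ≤ ‖z h n - 1‖}.Finite ∧
        (({n : ℕ | 1 ≤ n ∧ Real.exp (-L / h) ≤ ‖z h n - 1‖}.ncard : ℝ) ≤
          C₀ * (L / h) ^ (d - 1)))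
    (htrace : ∀ k : ℤ, k ≠ 0 →
      (∀ h ∈ Set.Ioo (0 : ℝ) 1, Summable (fun n : ℕ => ‖z h (n + 1) ^ k - 1‖)) ∧
        Filter.Tendsto
          (fun h : ℝ => (Complex.ofReal ((2 * π * h) ^ (d - 1))) *
            ∑' n : ℕ, (z h (n + 1) ^ k - 1))
          (nhdsWithin 0 (Set.Ioi 0)) (nhds (-(V : ℂ)))) :
    ∀ f : ℂ → ℂ, ContinuousOn f (Metric.sphere (0 : ℂ) 1) →
      ContinuousOn
        (fun w : ℂ => if w = 1 then (0 : ℂ)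
          else f w * Complex.ofReal (|Real.log (‖w - 1‖)| ^ α))
        (Metric.sphere (0 : ℂ) 1) →
      (∀ h ∈ Set.Ioo (0 : ℝ) 1, Summable (fun n : ℕ => ‖f (z h (n + 1))‖)) ∧
        Filter.Tendsto
          (fun h : ℝ => (Complex.ofReal ((2 * π * h) ^ (d - 1))) *
            ∑' n : ℕ, f (z h (n + 1)))
          (nhdsWithin 0 (Set.Ioi 0))
          (nhds ((Complex.ofReal (V / (2 * π))) *
            ∫ θ in (0 : ℝ)..(2 * π), f (Complex.exp (θ * Complex.I)))) := by
  intro f hf hWf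
  have hdpos : (0:ℝ) < (d:ℝ) := by exact_mod_cast (by omega : 0 < d)
  have hαpos : (0:ℝ) < α := lt_trans hdpos hα
  have hα1 : (1:ℝ) ≤ α := by
    have h2d : (2:ℝ) ≤ (d:ℝ) := by exact_mod_cast hd
    linarith
  have hf1 : f 1 = 0 := aux_f_one f hf hαpos hWf
  have h1sphere : (1:ℂ) ∈ Metric.sphere (0:ℂ) 1 := by
    rw [Metric.mem_sphere, dist_zero_right]
    norm_num
  obtain ⟨Mf, hMf⟩ := (isCompact_sphere (0:ℂ) 1).exists_bound_of_continuousOn hf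
  obtain ⟨MW, hMW⟩ := (isCompact_sphere (0:ℂ) 1).exists_bound_of_continuousOn hWf
  have hMf0 : 0 ≤ Mf := le_trans (norm_nonneg _) (hMf 1 h1sphere)
  have hMW0 : 0 ≤ MW := by
    have := hMW 1 h1sphere
    rw [if_pos rfl] at this
    simpa using this
  have hzmem : ∀ h ∈ Set.Ioo (0:ℝ) 1, ∀ n : ℕ, z h (n+1) ∈ Metric.sphere (0:ℂ) 1 := by
    intro h hh n
    rw [Metric.mem_sphere, dist_zero_right, Complex.norm_eq_abs]
    exact hmod h hh (n+1) (by omega)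
  have hexp1 : ∀ h : ℝ, 0 < h → Real.exp (-1/h) < 1 := by
    intro h hh
    apply Real.exp_lt_one_iff.2
    exact div_neg_of_neg_of_pos (by norm_num) hh
  -- near-1 bound for f
  have hfnear : ∀ w ∈ Metric.sphere (0:ℂ) 1, 0 < Complex.abs (w - 1) →
      Complex.abs (w - 1) < 1 →
      Complex.abs (f w) ≤ MW * (-Real.log (Complex.abs (w - 1))) ^ (-α) := by
    intro w hw hr0 hr1
    have hwne : w ≠ 1 := by
      intro hcon
      rw [hcon] at hr0
      simp at hr0
    have hlogneg : Real.log (Complex.abs (w-1)) < 0 := Real.log_neg hr0 hr1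
    have hWw := hMW w hw
    rw [if_neg hwne] at hWw
    have hnorm : ‖f w * Complex.ofReal (|Real.log (Complex.abs (w - 1))| ^ α)‖
        = Complex.abs (f w) * (-Real.log (Complex.abs (w-1))) ^ α := by
      rw [norm_mul, Complex.norm_eq_abs, Complex.norm_eq_abs, Complex.abs_ofReal,
        _root_.abs_of_nonneg (Real.rpow_nonneg (abs_nonneg _) _), abs_of_neg hlogneg]
    replace hWw : ‖f w * Complex.ofReal (|Real.log (Complex.abs (w - 1))| ^ α)‖ ≤ MW := hWw
    rw [hnorm] at hWw
    have hlogpos : (0:ℝ) < -Real.log (Complex.abs (w-1)) := by linarith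
    have hpow : (0:ℝ) < (-Real.log (Complex.abs (w-1))) ^ α :=
      Real.rpow_pos_of_pos hlogpos _
    rw [Real.rpow_neg hlogpos.le]
    calc Complex.abs (f w)
        = Complex.abs (f w) * (-Real.log (Complex.abs (w-1))) ^ α
            * ((-Real.log (Complex.abs (w-1))) ^ α)⁻¹ := by field_simp
      _ ≤ MW * ((-Real.log (Complex.abs (w-1))) ^ α)⁻¹ :=
          mul_le_mul_of_nonneg_right hWw (inv_nonneg.2 hpow.le)
  -- summability conjunct
  have hsummf : ∀ h ∈ Set.Ioo (0:ℝ) 1, Summable (fun n : ℕ => Complex.abs (f (z h (n+1)))) := by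
    intro h hh
    refine (aux_master hd hα hC₀ hcount hh hMf0 hMW0 le_rfl
      (fun n => AbsoluteValue.nonneg _ _) ?_ ?_ ?_).1
    · intro n
      have := hMf _ (hzmem h hh n)
      rwa [Complex.norm_eq_abs] at this
    · intro n hzn
      rw [hzn, hf1]
      simp
    · intro n hr0 hr1
      rw [zero_mul, add_zero]
      exact hfnear _ (hzmem h hh n) hr0 (lt_trans hr1 (hexp1 h hh.1))
  refine ⟨hsummf, ?_⟩
  rw [Metric.tendsto_nhds]
  intro ε₀ hε₀
  set X0 : ℝ := (2*π)^(d-1) * C₀ + |V| + 1 with hX0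
  have hX0pos : 0 < X0 := by positivity
  set ε : ℝ := ε₀ / (8 * X0) with hεdef
  have hεpos : 0 < ε := by positivity
  obtain ⟨c, hc⟩ := aux_fourier_approx f hf hεpos
  set Kp : ℝ := ∑ k ∈ c.support, Complex.abs (c k) * |(k:ℝ)| with hKp
  have hKp0 : 0 ≤ Kp := Finset.sum_nonneg (fun k _ => by positivity)
  -- global bound |f - p| ≤ 2ε on the circle
  have hq1 : Complex.abs (∑ k ∈ c.support, c k * (1:ℂ)^k) ≤ ε := by
    have h2 := hc 1 (by simp)
    rw [hf1, zero_sub, AbsoluteValue.map_neg] at h2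
    exact h2
  have hpdiff : ∀ w : ℂ, Complex.abs w = 1 →
      Complex.abs (f w - ∑ k ∈ c.support, c k * (w^k - 1)) ≤ 2*ε := by
    intro w hw
    have h1 := hc w hw
    have hsplit : f w - ∑ k ∈ c.support, c k * (w^k - 1)
        = (f w - ∑ k ∈ c.support, c k * w^k) + ∑ k ∈ c.support, c k * (1:ℂ)^k := by
      have he : ∑ k ∈ c.support, c k * (w^k - 1)
          = ∑ k ∈ c.support, (c k * w^k - c k * (1:ℂ)^k) := by
        apply Finset.sum_congr rfl
        intro k _
        rw [one_zpow]
        ring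
      rw [he, Finset.sum_sub_distrib]
      ring
    rw [hsplit]
    calc Complex.abs ((f w - ∑ k ∈ c.support, c k * w^k) + ∑ k ∈ c.support, c k * (1:ℂ)^k)
        ≤ Complex.abs (f w - ∑ k ∈ c.support, c k * w^k)
          + Complex.abs (∑ k ∈ c.support, c k * (1:ℂ)^k) := AbsoluteValue.add_le _ _ _
      _ ≤ ε + ε := add_le_add h1 hq1
      _ = 2*ε := by ring
  have hp1 : ∑ k ∈ c.support, c k * ((1:ℂ)^k - 1) = 0 := by
    apply Finset.sum_eq_zero
    intro k _
    rw [one_zpow]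
    simp
  have hplip : ∀ w : ℂ, Complex.abs w = 1 →
      Complex.abs (∑ k ∈ c.support, c k * (w^k - 1)) ≤ Kp * Complex.abs (w - 1) := by
    intro w hw
    calc Complex.abs (∑ k ∈ c.support, c k * (w^k - 1))
        ≤ ∑ k ∈ c.support, Complex.abs (c k * (w^k - 1)) :=
          AbsoluteValue.sum_le _ _ _
      _ ≤ ∑ k ∈ c.support, Complex.abs (c k) * (|(k:ℝ)| * Complex.abs (w - 1)) := by
          apply Finset.sum_le_sum
          intro k _
          rw [map_mul]
          exact mul_le_mul_of_nonneg_left (aux_zpow_sub_one w hw k) (AbsoluteValue.nonneg _ _)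
      _ = Kp * Complex.abs (w - 1) := by
          rw [hKp, Finset.sum_mul]
          apply Finset.sum_congr rfl
          intro k _
          ring
  -- the comparison series
  set Sser : ℕ → ℝ := fun L => (2*π)^(d-1) * C₀ * ((L:ℝ)+2)^(d-1) *
      (MW * ((L:ℝ)+1)^(-α) + Kp * (Real.exp 1 * Real.exp (-((L:ℝ)+1)))) with hSser
  have hSsum : Summable Sser := by
    have hA' : Summable (fun L : ℕ => (((L:ℝ)+2)^(d-1) * ((L:ℝ)+1)^(-α))) := by
      apply ((summable_nat_add_iff 1).2 (aux_summable_A hd hα)).congr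
      intro L
      push_cast
      ring_nf
    have hB' : Summable (fun L : ℕ => (((L:ℝ)+2)^(d-1) * Real.exp (-((L:ℝ)+1)))) := by
      have hx : (0:ℝ) < Real.exp (-1) := Real.exp_pos _
      have hx1 : Real.exp (-1) < 1 := Real.exp_lt_one_iff.2 (by norm_num)
      apply ((summable_nat_add_iff 1).2 (aux_summable_B (d := d) hx hx1)).congr
      intro L
      have : Real.exp (-((L:ℝ)+1)) = Real.exp (-1) ^ (L+1) := by
        rw [← Real.exp_nat_mul]
        congr 1
        push_cast
        ring
      rw [this]
      push_cast
      ring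
    have := ((hA'.mul_left ((2*π)^(d-1) * C₀ * MW)).add
      ((hB'.mul_left ((2*π)^(d-1) * C₀ * (Kp * Real.exp 1)))))
    apply this.congr
    intro L
    rw [hSser]
    ring
  set Sc : ℝ := ∑' L, Sser L with hSc
  have hSc0 : 0 ≤ Sc := by
    apply tsum_nonneg
    intro L
    rw [hSser]
    have h1 : (0:ℝ) ≤ ((L:ℝ)+1)^(-α) := Real.rpow_nonneg (by positivity) _
    positivity
  -- eventual facts
  have hIooMem : Set.Ioo (0:ℝ) 1 ∈ nhdsWithin (0:ℝ) (Set.Ioi 0) :=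
    Ioo_mem_nhdsGT_of_mem (by norm_num : (0:ℝ) ∈ Set.Ico (0:ℝ) 1)
  have hδpos : 0 < ε₀ / (4 * (Sc + 1)) := by positivity
  have hδMem : Set.Ioo (0:ℝ) (ε₀ / (4 * (Sc + 1))) ∈ nhdsWithin (0:ℝ) (Set.Ioi 0) :=
    Ioo_mem_nhdsGT_of_mem (by constructor <;> [norm_num; exact hδpos])
  have hPtend := (aux_poly_limit htrace c).2
  have hPev := (Metric.tendsto_nhds.1 hPtend) (ε₀/4) (by positivity)
  have hev1 : ∀ᶠ h in nhdsWithin (0:ℝ) (Set.Ioi 0), h ∈ Set.Ioo (0:ℝ) 1 :=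
    Filter.eventually_of_mem hIooMem (fun x hx => hx)
  have hev2 : ∀ᶠ h in nhdsWithin (0:ℝ) (Set.Ioi 0), h < ε₀ / (4 * (Sc + 1)) :=
    Filter.eventually_of_mem hδMem (fun x hx => hx.2)
  filter_upwards [hev1, hev2, hPev] with h hh hhδ hhP
  -- fixed h from now on
  have hh0 : 0 < h := hh.1
  have hh1 : h < 1 := hh.2
  have hne : h ≠ 0 := ne_of_gt hh0
  beta_reduce at hhP
  -- summability facts at h
  have hfsum : Summable (fun n : ℕ => f (z h (n+1))) := by
    apply Summable.of_norm
    apply (hsummf h hh).congr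
    intro n
    rw [Complex.norm_eq_abs]
  have hpsumk := (aux_poly_limit htrace c).1 h hh
  have hpsum : Summable (fun n : ℕ => ∑ k ∈ c.support, c k * (z h (n+1) ^ k - 1)) :=
    summable_sum (fun k _ => hpsumk k)
  -- master for the difference
  have hmaster := aux_master hd hα hC₀ hcount hh (M := 2*ε) (B := MW) (B' := Kp)
    (by linarith) hMW0 hKp0
    (G := fun n => Complex.abs (f (z h (n+1)) - ∑ k ∈ c.support, c k * (z h (n+1) ^ k - 1)))
    (fun n => AbsoluteValue.nonneg _ _)
    (fun n => hpdiff _ (hmod h hh (n+1) (by omega)))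
    (by
      intro n hzn
      beta_reduce
      rw [hzn, hf1, hp1]
      simp)
    (by
      intro n hr0 hr1
      beta_reduce
      have hw1 : Complex.abs (z h (n+1)) = 1 := hmod h hh (n+1) (by omega)
      have htri : Complex.abs (f (z h (n+1)) - ∑ k ∈ c.support, c k * (z h (n+1) ^ k - 1))
          ≤ Complex.abs (f (z h (n+1)))
            + Complex.abs (∑ k ∈ c.support, c k * (z h (n+1) ^ k - 1)) := by
        rw [sub_eq_add_neg]
        refine (AbsoluteValue.add_le _ _ _).trans ?_
        rw [AbsoluteValue.map_neg]
      have hb1 := hfnear _ (hzmem h hh n) hr0 (lt_trans hr1 (hexp1 h hh0))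
      have hb2 := hplip _ hw1
      linarith)
  obtain ⟨hGsum, hGle⟩ := hmaster
  -- norms
  set X : ℝ := (2*π*h)^(d-1) with hXdef
  have hXpos : 0 < X := by positivity
  -- (1) difference of measures
  have hnorm1 : ‖(Complex.ofReal X) * ∑' n : ℕ, f (z h (n+1))
      - (Complex.ofReal X) * ∑' n : ℕ, ∑ k ∈ c.support, c k * (z h (n+1) ^ k - 1)‖
      ≤ X * ∑' n : ℕ, Complex.abs (f (z h (n+1))
          - ∑ k ∈ c.support, c k * (z h (n+1) ^ k - 1)) := by
    rw [← mul_sub, ← Summable.tsum_sub hfsum hpsum]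
    rw [norm_mul, Complex.norm_real, Real.norm_eq_abs, _root_.abs_of_pos hXpos]
    apply mul_le_mul_of_nonneg_left _ hXpos.le
    refine (norm_tsum_le_tsum_norm ?_).trans ?_
    · apply hGsum.congr
      intro n
      rw [Complex.norm_eq_abs]
    · apply le_of_eq
      apply tsum_congr
      intro n
      rw [Complex.norm_eq_abs]
  -- bound the tsum via master and the comparison series
  have hXtail : X * (∑' (L:ℕ), C₀ * (((L:ℝ)+2)/h)^(d-1) *
      (MW * (((L:ℝ)+1)/h)^(-α) + Kp * Real.exp (-((L:ℝ)+1)/h))) ≤ h * Sc := by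
    have htailsum := aux_summable_tail hd hα hh0 hMW0 hKp0 (C₀ := C₀)
    have hperterm : ∀ L : ℕ, X * (C₀ * (((L:ℝ)+2)/h)^(d-1) *
        (MW * (((L:ℝ)+1)/h)^(-α) + Kp * Real.exp (-((L:ℝ)+1)/h))) ≤ h * Sser L := by
      intro L
      set y : ℝ := (L:ℝ)+1 with hy
      have hy1 : (1:ℝ) ≤ y := by
        rw [hy]
        have : (0:ℝ) ≤ (L:ℝ) := Nat.cast_nonneg L
        linarith
      have hyp : (0:ℝ) < y := by linarith
      have k1 : X * (((L:ℝ)+2)/h)^(d-1) = (2*π)^(d-1) * ((L:ℝ)+2)^(d-1) := by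
        rw [hXdef, ← mul_pow, ← mul_pow]
        congr 1
        field_simp
      have k2 : (y/h)^(-α) = y^(-α) * h^α := by
        rw [Real.div_rpow hyp.le hh0.le, Real.rpow_neg hh0.le, div_eq_mul_inv, inv_inv]
      have k3 : h^α ≤ h := by
        have := Real.rpow_le_rpow_of_exponent_ge hh0 hh1.le hα1
        rwa [Real.rpow_one] at this
      have k4 : Real.exp (-y/h) ≤ Real.exp 1 * Real.exp (-y) * h := by
        have hih : (1:ℝ) ≤ 1/h := by
          rw [le_div_iff₀ hh0]
          linarith
        have hexph : Real.exp (-(1/h)) ≤ h := by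
          have h2 := Real.add_one_le_exp (1/h)
          have h3 : 1/h ≤ Real.exp (1/h) := by linarith
          rw [Real.exp_neg]
          have h4 : (Real.exp (1/h))⁻¹ ≤ (1/h)⁻¹ :=
            inv_anti₀ (by positivity) h3
          have h5 : ((1:ℝ)/h)⁻¹ = h := by field_simp
          rw [h5] at h4
          exact h4
        have hchain : -y/h ≤ 1 + (-y) + (-(1/h)) := by
          rw [div_le_iff₀ hh0]
          have expand : (1 + -y + -(1/h)) * h = h - y*h - 1 := by
            field_simp
            ring
          rw [expand]
          nlinarith
        calc Real.exp (-y/h) ≤ Real.exp (1 + (-y) + (-(1/h))) := Real.exp_le_exp.2 hchain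
          _ = Real.exp 1 * Real.exp (-y) * Real.exp (-(1/h)) := by
              rw [Real.exp_add, Real.exp_add]
          _ ≤ Real.exp 1 * Real.exp (-y) * h := by
              apply mul_le_mul_of_nonneg_left hexph (by positivity)
      have expand : X * (C₀ * (((L:ℝ)+2)/h)^(d-1) *
          (MW * (y/h)^(-α) + Kp * Real.exp (-y/h)))
          = (2*π)^(d-1) * ((L:ℝ)+2)^(d-1) * C₀ *
            (MW * (y^(-α) * h^α) + Kp * Real.exp (-y/h)) := by
        rw [k2]
        calc X * (C₀ * (((L:ℝ)+2)/h)^(d-1) * (MW * (y^(-α) * h^α) + Kp * Real.exp (-y/h)))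
            = (X * (((L:ℝ)+2)/h)^(d-1)) * C₀ *
              (MW * (y^(-α) * h^α) + Kp * Real.exp (-y/h)) := by ring
          _ = (2*π)^(d-1) * ((L:ℝ)+2)^(d-1) * C₀ *
              (MW * (y^(-α) * h^α) + Kp * Real.exp (-y/h)) := by rw [k1]
      rw [expand]
      have hynn : (0:ℝ) ≤ y^(-α) := Real.rpow_nonneg hyp.le _
      have inner : MW * (y^(-α) * h^α) + Kp * Real.exp (-y/h)
          ≤ (MW * y^(-α) + Kp * (Real.exp 1 * Real.exp (-y))) * h := by
        have i1 : MW * (y^(-α) * h^α) ≤ MW * y^(-α) * h := by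
          have step : y^(-α) * h^α ≤ y^(-α) * h :=
            mul_le_mul_of_nonneg_left k3 hynn
          calc MW * (y^(-α) * h^α) ≤ MW * (y^(-α) * h) :=
                mul_le_mul_of_nonneg_left step hMW0
            _ = MW * y^(-α) * h := by ring
        have i2 : Kp * Real.exp (-y/h) ≤ Kp * (Real.exp 1 * Real.exp (-y)) * h := by
          calc Kp * Real.exp (-y/h) ≤ Kp * (Real.exp 1 * Real.exp (-y) * h) :=
                mul_le_mul_of_nonneg_left k4 hKp0
            _ = Kp * (Real.exp 1 * Real.exp (-y)) * h := by ring
        have hexpand : (MW * y^(-α) + Kp * (Real.exp 1 * Real.exp (-y))) * h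
            = MW * y^(-α) * h + Kp * (Real.exp 1 * Real.exp (-y)) * h := by ring
        rw [hexpand]
        linarith
      calc (2*π)^(d-1) * ((L:ℝ)+2)^(d-1) * C₀ *
            (MW * (y^(-α) * h^α) + Kp * Real.exp (-y/h))
          ≤ (2*π)^(d-1) * ((L:ℝ)+2)^(d-1) * C₀ *
            ((MW * y^(-α) + Kp * (Real.exp 1 * Real.exp (-y))) * h) :=
            mul_le_mul_of_nonneg_left inner (by positivity)
        _ = h * Sser L := by
            rw [hSser, hy]
            ring
    calc X * (∑' (L:ℕ), C₀ * (((L:ℝ)+2)/h)^(d-1) *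
          (MW * (((L:ℝ)+1)/h)^(-α) + Kp * Real.exp (-((L:ℝ)+1)/h)))
        = ∑' (L:ℕ), X * (C₀ * (((L:ℝ)+2)/h)^(d-1) *
          (MW * (((L:ℝ)+1)/h)^(-α) + Kp * Real.exp (-((L:ℝ)+1)/h))) := by
          rw [tsum_mul_left]
      _ ≤ ∑' (L:ℕ), h * Sser L :=
          Summable.tsum_le_tsum hperterm (htailsum.mul_left X) (hSsum.mul_left h)
      _ = h * Sc := by rw [tsum_mul_left, hSc]
  have hfar : X * (C₀ * (1/h)^(d-1) * (2*ε)) = (2*π)^(d-1) * C₀ * (2*ε) := by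
    have : X * (1/h)^(d-1) = (2*π)^(d-1) := by
      rw [hXdef, ← mul_pow]
      congr 1
      field_simp
    calc X * (C₀ * (1/h)^(d-1) * (2*ε)) = (X * (1/h)^(d-1)) * C₀ * (2*ε) := by ring
      _ = (2*π)^(d-1) * C₀ * (2*ε) := by rw [this]
  -- combine (1)
  have hbound1 : ‖(Complex.ofReal X) * ∑' n : ℕ, f (z h (n+1))
      - (Complex.ofReal X) * ∑' n : ℕ, ∑ k ∈ c.support, c k * (z h (n+1) ^ k - 1)‖
      ≤ (2*π)^(d-1) * C₀ * (2*ε) + h * Sc := by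
    refine hnorm1.trans ?_
    have step := mul_le_mul_of_nonneg_left hGle hXpos.le
    rw [mul_add] at step
    refine step.trans ?_
    rw [hfar]
    exact add_le_add le_rfl hXtail
  -- (3) integral comparison
  have hcontexp : Continuous fun θ : ℝ => Complex.exp ((θ:ℂ) * I) :=
    Complex.continuous_exp.comp ((Complex.continuous_ofReal).mul continuous_const)
  have hexpsphere : ∀ θ : ℝ, Complex.exp ((θ:ℂ) * I) ∈ Metric.sphere (0:ℂ) 1 := by
    intro θ
    rw [Metric.mem_sphere, dist_zero_right, Complex.norm_eq_abs, Complex.abs_exp_ofReal_mul_I]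
  have hcontf : Continuous (fun θ : ℝ => f (Complex.exp ((θ:ℂ) * I))) :=
    hf.comp_continuous hcontexp hexpsphere
  have hfunk : ∀ (k:ℤ) (θ:ℝ), Complex.exp ((θ:ℂ) * I) ^ k = Complex.exp (((k:ℂ) * I) * θ) := by
    intro k θ
    rw [← Complex.exp_int_mul]
    congr 1
    push_cast
    ring
  have hcontp : Continuous (fun θ : ℝ =>
      ∑ k ∈ c.support, c k * (Complex.exp ((θ:ℂ) * I) ^ k - 1)) := by
    apply continuous_finset_sum
    intro k _
    have hg : Continuous (fun θ : ℝ => c k * (Complex.exp (((k:ℂ) * I) * θ) - 1)) := by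
      apply Continuous.mul continuous_const
      apply Continuous.sub _ continuous_const
      exact Complex.continuous_exp.comp (continuous_const.mul Complex.continuous_ofReal)
    apply hg.congr
    intro θ
    rw [hfunk]
  have hintf := hcontf.intervalIntegrable (μ := MeasureTheory.volume) 0 (2*π)
  have hintp := hcontp.intervalIntegrable (μ := MeasureTheory.volume) 0 (2*π)
  have hbound3 : ‖(∑ k ∈ c.support, c k * (if k = (0:ℤ) then 0 else -(V:ℂ)))
      - (Complex.ofReal (V / (2 * π))) *
        (∫ θ in (0:ℝ)..(2*π), f (Complex.exp (θ * Complex.I)))‖ ≤ 2 * |V| * ε := by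
    rw [← aux_integral_poly (V := V) c, ← mul_sub,
      ← intervalIntegral.integral_sub hintp hintf]
    rw [norm_mul, Complex.norm_real, Real.norm_eq_abs]
    have hVabs : |V / (2*π)| = |V| / (2*π) := by
      rw [abs_div]
      congr 1
      rw [_root_.abs_of_pos (by positivity : (0:ℝ) < 2*π)]
    have hintbound : ‖(∫ θ in (0:ℝ)..(2*π),
        ((∑ k ∈ c.support, c k * (Complex.exp ((θ:ℂ) * I) ^ k - 1))
          - f (Complex.exp ((θ:ℂ) * I))))‖ ≤ (2*ε) * |2*π - 0| := by
      apply intervalIntegral.norm_integral_le_of_norm_le_const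
      intro θ _
      rw [Complex.norm_eq_abs, ← AbsoluteValue.map_neg, neg_sub]
      exact hpdiff _ (by
        rw [Complex.abs_exp_ofReal_mul_I])
    rw [hVabs]
    calc |V| / (2*π) * ‖(∫ θ in (0:ℝ)..(2*π),
          ((∑ k ∈ c.support, c k * (Complex.exp ((θ:ℂ) * I) ^ k - 1))
            - f (Complex.exp ((θ:ℂ) * I))))‖
        ≤ |V| / (2*π) * ((2*ε) * |2*π - 0|) :=
          mul_le_mul_of_nonneg_left hintbound (by positivity)
      _ = 2 * |V| * ε := by
          rw [sub_zero, _root_.abs_of_pos (by positivity : (0:ℝ) < 2*π)]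
          field_simp
  -- final triangle inequality
  have htri := dist_triangle4
    ((Complex.ofReal X) * ∑' n : ℕ, f (z h (n+1)))
    ((Complex.ofReal X) * ∑' n : ℕ, ∑ k ∈ c.support, c k * (z h (n+1) ^ k - 1))
    (∑ k ∈ c.support, c k * (if k = (0:ℤ) then 0 else -(V:ℂ)))
    ((Complex.ofReal (V / (2 * π))) *
      ∫ θ in (0:ℝ)..(2*π), f (Complex.exp (θ * Complex.I)))
  have hd3 : dist (∑ k ∈ c.support, c k * (if k = (0:ℤ) then 0 else -(V:ℂ)))
      ((Complex.ofReal (V / (2 * π))) *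
        ∫ θ in (0:ℝ)..(2*π), f (Complex.exp (θ * Complex.I))) ≤ 2 * |V| * ε := by
    rw [dist_eq_norm]
    exact hbound3
  -- numeric conclusion
  have hεX : (2*π)^(d-1) * C₀ * (2*ε) + 2 * |V| * ε ≤ ε₀/4 := by
    have e1 : (2*π)^(d-1) * C₀ * (2*ε) + 2 * |V| * ε = 2*ε*((2*π)^(d-1) * C₀ + |V|) := by ring
    have e2 : (2*π)^(d-1) * C₀ + |V| ≤ X0 := by
      rw [hX0]
      linarith
    have e3 : 2*ε*((2*π)^(d-1) * C₀ + |V|) ≤ 2*ε*X0 := by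
      apply mul_le_mul_of_nonneg_left e2 (by positivity)
    have e4 : 2*ε*X0 = ε₀/4 := by
      rw [hεdef]
      field_simp
      ring
    linarith
  have hhS : h * Sc < ε₀/4 := by
    have : h * (Sc + 1) < ε₀ / (4 * (Sc + 1)) * (Sc + 1) := by
      apply mul_lt_mul_of_pos_right hhδ (by positivity)
    have e5 : ε₀ / (4 * (Sc + 1)) * (Sc + 1) = ε₀/4 := by
      field_simp
    nlinarith
  refine lt_of_le_of_lt htri ?_
  rw [dist_eq_norm]
  have hstep : ‖(Complex.ofReal X) * ∑' n : ℕ, f (z h (n+1))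
      - (Complex.ofReal X) * ∑' n : ℕ, ∑ k ∈ c.support, c k * (z h (n+1) ^ k - 1)‖
      + dist ((Complex.ofReal X) * ∑' n : ℕ, ∑ k ∈ c.support, c k * (z h (n+1) ^ k - 1))
          (∑ k ∈ c.support, c k * (if k = (0:ℤ) then 0 else -(V:ℂ)))
      + dist (∑ k ∈ c.support, c k * (if k = (0:ℤ) then 0 else -(V:ℂ)))
          ((Complex.ofReal (V / (2 * π))) *
            ∫ θ in (0:ℝ)..(2*π), f (Complex.exp (θ * Complex.I)))
      < ((2*π)^(d-1) * C₀ * (2*ε) + h * Sc) + ε₀/4 + (2 * |V| * ε) := by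
    have h2 : dist ((Complex.ofReal X) * ∑' n : ℕ, ∑ k ∈ c.support, c k * (z h (n+1) ^ k - 1))
        (∑ k ∈ c.support, c k * (if k = (0:ℤ) then 0 else -(V:ℂ))) < ε₀/4 := hhP
    linarith [hbound1, hd3, h2]
  refine hstep.trans_le ?_
  linarith [hεX, hhS]
end
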